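/- arXiv:0910.4067 — 4 statements merged into one kernel-verified Lean document; each statement's English description precedes it below -/
import Mathlib

section
/- A binary phylogenetic tree on a set X with at least 3 leaves is uniquely determined (up to isomorphism preserving leaf labels) by the set of rooted triplets it induces. -/
/-- Rooted binary trees with leaves labelled by `X`. -/
inductive BTree (X : Type) where
  | leaf (x : X)
  | node (l r : BTree X)

namespace BTree
variable {X : Type}

/-- The list of leaf labels of a tree. -/
def leafList : BTree X → List X
  | leaf x => [x]
  | node l r => leafList l ++ leafList r

/-- `IsSub s t`: `s` is a (rooted) subtree of `t`; subtrees correspond to vertices of `t`. -/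
inductive IsSub : BTree X → BTree X → Prop
  | refl (t : BTree X) : IsSub t t
  | left {s l r : BTree X} : IsSub s l → IsSub s (node l r)
  | right {s l r : BTree X} : IsSub s r → IsSub s (node l r)

/-- `t` induces the rooted triplet `ab|c`: some subtree (i.e. the one rooted at the
lowest common ancestor of `a` and `b`, a proper descendant of the lowest common
ancestor of `a` and `c`) contains the leaves `a` and `b` but not `c`. -/
def Induces (t : BTree X) (a b c : X) : Prop :=
  ∃ s, IsSub s t ∧ a ∈ s.leafList ∧ b ∈ s.leafList ∧ c ∉ s.leafList

/-- `t` is a binary phylogenetic tree on `X`: its leaves are bijectively labelled by `X`. -/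
def IsPhyloOn [Fintype X] (t : BTree X) : Prop :=
  t.leafList.Nodup ∧ ∀ x : X, x ∈ t.leafList

/-- Isomorphism of rooted binary phylogenetic trees fixing all leaf labels
(children may be exchanged). -/
inductive Iso : BTree X → BTree X → Prop
  | leaf (x : X) : Iso (leaf x) (leaf x)
  | node {l₁ r₁ l₂ r₂ : BTree X} : Iso l₁ l₂ → Iso r₁ r₂ → Iso (node l₁ r₁) (node l₂ r₂)
  | swap {l₁ r₁ l₂ r₂ : BTree X} : Iso l₁ r₂ → Iso r₁ l₂ → Iso (node l₁ r₁) (node l₂ r₂)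

end BTree

namespace BTree
variable {X : Type}

lemma leafList_ne_nil (t : BTree X) : t.leafList ≠ [] := by
  induction t with
  | leaf x => simp [leafList]
  | node l r ihl ihr => simp [leafList, ihl]

lemma sub_subset {s t : BTree X} (h : IsSub s t) : ∀ x ∈ s.leafList, x ∈ t.leafList := by
  induction h with
  | refl => exact fun x hx => hx
  | left h ih => intro x hx; simp [leafList]; exact Or.inl (ih x hx)
  | right h ih => intro x hx; simp [leafList]; exact Or.inr (ih x hx)

lemma disj_of_nodup {l r : BTree X} (h : (node l r).leafList.Nodup) :
    ∀ x ∈ l.leafList, x ∉ r.leafList := by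
  have := List.disjoint_of_nodup_append h
  exact fun x hx => this hx

lemma induces_left {l r : BTree X} (hnd : (node l r).leafList.Nodup) {a b c : X}
    (ha : a ∈ l.leafList) (hc : c ∈ (node l r).leafList) :
    Induces (node l r) a b c ↔ Induces l a b c := by
  constructor
  · rintro ⟨s, hs, has, hbs, hcs⟩
    cases hs with
    | refl => exact absurd hc hcs
    | left h => exact ⟨s, h, has, hbs, hcs⟩
    | right h => exact absurd (sub_subset h a has) (fun h' => disj_of_nodup hnd a ha h')
  · rintro ⟨s, hs, has, hbs, hcs⟩
    exact ⟨s, IsSub.left hs, has, hbs, hcs⟩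

lemma induces_right {l r : BTree X} (hnd : (node l r).leafList.Nodup) {a b c : X}
    (ha : a ∈ r.leafList) (hc : c ∈ (node l r).leafList) :
    Induces (node l r) a b c ↔ Induces r a b c := by
  constructor
  · rintro ⟨s, hs, has, hbs, hcs⟩
    cases hs with
    | refl => exact absurd hc hcs
    | left h => exact absurd ha (disj_of_nodup hnd a (sub_subset h a has))
    | right h => exact ⟨s, h, has, hbs, hcs⟩
  · rintro ⟨s, hs, has, hbs, hcs⟩
    exact ⟨s, IsSub.right hs, has, hbs, hcs⟩

lemma samechild_iff {l r : BTree X} (hnd : (node l r).leafList.Nodup) (a b : X) :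
    ((a ∈ l.leafList ∧ b ∈ l.leafList) ∨ (a ∈ r.leafList ∧ b ∈ r.leafList)) ↔
      ∃ c ∈ (node l r).leafList, Induces (node l r) a b c := by
  constructor
  · rintro (⟨ha, hb⟩ | ⟨ha, hb⟩)
    · obtain ⟨c, hc⟩ := List.exists_mem_of_ne_nil _ (leafList_ne_nil r)
      refine ⟨c, ?_, l, IsSub.left (IsSub.refl l), ha, hb, ?_⟩
      · simp [leafList]; exact Or.inr hc
      · intro hcl; exact disj_of_nodup hnd c hcl hc
    · obtain ⟨c, hc⟩ := List.exists_mem_of_ne_nil _ (leafList_ne_nil l)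
      refine ⟨c, ?_, r, IsSub.right (IsSub.refl r), ha, hb, ?_⟩
      · simp [leafList]; exact Or.inl hc
      · intro hcr; exact disj_of_nodup hnd c hc hcr
  · rintro ⟨c, hc, s, hs, has, hbs, hcs⟩
    cases hs with
    | refl => exact absurd hc hcs
    | left h => exact Or.inl ⟨sub_subset h a has, sub_subset h b hbs⟩
    | right h => exact Or.inr ⟨sub_subset h a has, sub_subset h b hbs⟩

lemma key : ∀ (t₁ t₂ : BTree X), t₁.leafList.Nodup → t₂.leafList.Nodup →
    (∀ x, x ∈ t₁.leafList ↔ x ∈ t₂.leafList) →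
    (∀ a b c, a ∈ t₁.leafList → b ∈ t₁.leafList → c ∈ t₁.leafList →
      (t₁.Induces a b c ↔ t₂.Induces a b c)) →
    Iso t₁ t₂ := by
  intro t₁
  induction t₁ with
  | leaf x =>
    intro t₂ _ hnd₂ hmem _
    cases t₂ with
    | leaf y =>
      have : y = x := by simpa [leafList] using (hmem y).mpr (by simp [leafList])
      subst this; exact Iso.leaf y
    | node l r =>
      obtain ⟨y, hy⟩ := List.exists_mem_of_ne_nil _ (leafList_ne_nil l)
      obtain ⟨z, hz⟩ := List.exists_mem_of_ne_nil _ (leafList_ne_nil r)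
      have hy' : y = x := by
        simpa [leafList] using (hmem y).mpr (by simp [leafList]; exact Or.inl hy)
      have hz' : z = x := by
        simpa [leafList] using (hmem z).mpr (by simp [leafList]; exact Or.inr hz)
      rw [hy'] at hy; rw [hz'] at hz
      exact absurd hz (disj_of_nodup hnd₂ x hy)
  | node l₁ r₁ ihl ihr =>
    intro t₂ hnd₁ hnd₂ hmem htrip
    obtain ⟨a₀, ha₀⟩ := List.exists_mem_of_ne_nil _ (leafList_ne_nil l₁)
    obtain ⟨b₀, hb₀⟩ := List.exists_mem_of_ne_nil _ (leafList_ne_nil r₁)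
    cases t₂ with
    | leaf y =>
      have ha' : a₀ = y := by
        simpa [leafList] using (hmem a₀).mp (by simp [leafList]; exact Or.inl ha₀)
      have hb' : b₀ = y := by
        simpa [leafList] using (hmem b₀).mp (by simp [leafList]; exact Or.inr hb₀)
      rw [ha'] at ha₀; rw [hb'] at hb₀
      exact absurd hb₀ (disj_of_nodup hnd₁ y ha₀)
    | node l₂ r₂ =>
      -- same-child relation transfers
      have hsc : ∀ a b, a ∈ (node l₁ r₁).leafList → b ∈ (node l₁ r₁).leafList →
          (((a ∈ l₁.leafList ∧ b ∈ l₁.leafList) ∨ (a ∈ r₁.leafList ∧ b ∈ r₁.leafList)) ↔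
           ((a ∈ l₂.leafList ∧ b ∈ l₂.leafList) ∨ (a ∈ r₂.leafList ∧ b ∈ r₂.leafList))) := by
        intro a b ha hb
        rw [samechild_iff hnd₁, samechild_iff hnd₂]
        constructor
        · rintro ⟨c, hc, h⟩
          exact ⟨c, (hmem c).mp hc, (htrip a b c ha hb hc).mp h⟩
        · rintro ⟨c, hc, h⟩
          have hc' : c ∈ (node l₁ r₁).leafList := (hmem c).mpr hc
          exact ⟨c, hc', (htrip a b c ha hb hc').mpr h⟩
      have memt₁ : ∀ x, x ∈ l₁.leafList ∨ x ∈ r₁.leafList → x ∈ (node l₁ r₁).leafList := by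
        intro x hx; simp [leafList]; simpa [List.mem_append] using hx
      have memt₂ : ∀ x, x ∈ (node l₂ r₂).leafList → x ∈ l₂.leafList ∨ x ∈ r₂.leafList := by
        intro x hx; simpa [leafList, List.mem_append] using hx
      have ha₀t : a₀ ∈ (node l₁ r₁).leafList := memt₁ a₀ (Or.inl ha₀)
      -- Block-matching given a₀'s location in t₂
      have blocks : ∀ {A₂ B₂ : BTree X},
          ((node l₂ r₂) = node A₂ B₂ ∨ (node l₂ r₂) = node B₂ A₂) → a₀ ∈ A₂.leafList →
          (∀ x, x ∈ l₁.leafList ↔ x ∈ A₂.leafList) := by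
        intro A₂ B₂ hAB ha₀A x
        have hABmem : ∀ y, y ∈ (node l₂ r₂).leafList ↔
            (y ∈ A₂.leafList ∨ y ∈ B₂.leafList) := by
          intro y
          rcases hAB with h | h <;> rw [h] <;> simp [leafList, List.mem_append] <;> tauto
        have hdisjAB : ∀ y, y ∈ A₂.leafList → y ∉ B₂.leafList := by
          intro y hyA hyB
          rcases hAB with h | h
          · exact disj_of_nodup (h ▸ hnd₂) y hyA hyB
          · exact disj_of_nodup (h ▸ hnd₂) y hyB hyA
        have hsc2 : ∀ a b, ((a ∈ l₂.leafList ∧ b ∈ l₂.leafList) ∨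
            (a ∈ r₂.leafList ∧ b ∈ r₂.leafList)) ↔
            ((a ∈ A₂.leafList ∧ b ∈ A₂.leafList) ∨ (a ∈ B₂.leafList ∧ b ∈ B₂.leafList)) := by
          intro a b
          rcases hAB with h | h <;> cases h <;> tauto
        constructor
        · intro hx
          have hxt : x ∈ (node l₁ r₁).leafList := memt₁ x (Or.inl hx)
          have := ((hsc x a₀ hxt ha₀t).mp (Or.inl ⟨hx, ha₀⟩))
          rcases (hsc2 x a₀).mp this with ⟨h1, _⟩ | ⟨_, h2⟩
          · exact h1
          · exact absurd h2 (hdisjAB a₀ ha₀A)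
        · intro hx
          have hxt₂ : x ∈ (node l₂ r₂).leafList := (hABmem x).mpr (Or.inl hx)
          have hxt : x ∈ (node l₁ r₁).leafList := (hmem x).mpr hxt₂
          have hsame₂ : (x ∈ l₂.leafList ∧ a₀ ∈ l₂.leafList) ∨
              (x ∈ r₂.leafList ∧ a₀ ∈ r₂.leafList) :=
            (hsc2 x a₀).mpr (Or.inl ⟨hx, ha₀A⟩)
          rcases (hsc x a₀ hxt ha₀t).mpr hsame₂ with ⟨h1, _⟩ | ⟨_, h2⟩
          · exact h1
          · exact absurd h2 (disj_of_nodup hnd₁ a₀ ha₀)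
      -- derive R-block equality from L-block equality
      have rblocks : ∀ {A₂ B₂ : BTree X},
          (∀ y, y ∈ (node l₂ r₂).leafList ↔ (y ∈ A₂.leafList ∨ y ∈ B₂.leafList)) →
          (∀ y, y ∈ A₂.leafList → y ∉ B₂.leafList) →
          (∀ x, x ∈ l₁.leafList ↔ x ∈ A₂.leafList) →
          (∀ x, x ∈ r₁.leafList ↔ x ∈ B₂.leafList) := by
        intro A₂ B₂ hABmem hdisjAB hL x
        constructor
        · intro hx
          have hxt : x ∈ (node l₂ r₂).leafList := (hmem x).mp (memt₁ x (Or.inr hx))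
          rcases (hABmem x).mp hxt with h | h
          · exact absurd hx (fun hx => disj_of_nodup hnd₁ x ((hL x).mpr h) hx)
          · exact h
        · intro hx
          have hxt : x ∈ (node l₁ r₁).leafList :=
            (hmem x).mpr ((hABmem x).mpr (Or.inr hx))
          have : x ∈ l₁.leafList ∨ x ∈ r₁.leafList := by
            simpa [leafList, List.mem_append] using hxt
          rcases this with h | h
          · exact absurd hx (hdisjAB x ((hL x).mp h))
          · exact h
      have hndl₁ : l₁.leafList.Nodup := (List.nodup_append.mp hnd₁).1
      have hndr₁ : r₁.leafList.Nodup := (List.nodup_append.mp hnd₁).2.1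
      have hndl₂ : l₂.leafList.Nodup := (List.nodup_append.mp hnd₂).1
      have hndr₂ : r₂.leafList.Nodup := (List.nodup_append.mp hnd₂).2.1
      -- triplet transfer for children
      have tripchild : ∀ (c₁ c₂ : BTree X),
          (∀ x, x ∈ c₁.leafList → x ∈ (node l₁ r₁).leafList) →
          (∀ x, x ∈ c₂.leafList → x ∈ (node l₂ r₂).leafList) →
          (∀ {a b c : X}, a ∈ c₁.leafList → c ∈ (node l₁ r₁).leafList →
            (Induces (node l₁ r₁) a b c ↔ Induces c₁ a b c)) →
          (∀ {a b c : X}, a ∈ c₂.leafList → c ∈ (node l₂ r₂).leafList →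
            (Induces (node l₂ r₂) a b c ↔ Induces c₂ a b c)) →
          (∀ x, x ∈ c₁.leafList ↔ x ∈ c₂.leafList) →
          (∀ a b c, a ∈ c₁.leafList → b ∈ c₁.leafList → c ∈ c₁.leafList →
            (c₁.Induces a b c ↔ c₂.Induces a b c)) := by
        intro c₁ c₂ hup₁ hup₂ hch₁ hch₂ hLL a b c ha hb hc
        rw [← hch₁ ha (hup₁ c hc), ← hch₂ ((hLL a).mp ha) (hup₂ c ((hLL c).mp hc))]
        exact htrip a b c (hup₁ a ha) (hup₁ b hb) (hup₁ c hc)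
      rcases memt₂ a₀ ((hmem a₀).mp ha₀t) with ha₀L | ha₀R
      · -- L₁ = L₂, R₁ = R₂
        have hL := blocks (Or.inl rfl) ha₀L
        have hR := rblocks (fun y => by simp [leafList, List.mem_append])
          (disj_of_nodup hnd₂) hL
        refine Iso.node (ihl l₂ hndl₁ hndl₂ hL ?_) (ihr r₂ hndr₁ hndr₂ hR ?_)
        · exact tripchild l₁ l₂ (fun x hx => memt₁ x (Or.inl hx))
            (fun x hx => by simp [leafList]; exact Or.inl hx)
            (fun ha hc => induces_left hnd₁ ha hc)
            (fun ha hc => induces_left hnd₂ ha hc) hL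
        · exact tripchild r₁ r₂ (fun x hx => memt₁ x (Or.inr hx))
            (fun x hx => by simp [leafList]; exact Or.inr hx)
            (fun ha hc => induces_right hnd₁ ha hc)
            (fun ha hc => induces_right hnd₂ ha hc) hR
      · -- L₁ = R₂, R₁ = L₂
        have hL := blocks (Or.inr rfl) ha₀R
        have hR := rblocks (A₂ := r₂) (B₂ := l₂)
          (fun y => by simp [leafList, List.mem_append]; tauto)
          (fun y hyr hyl => disj_of_nodup hnd₂ y hyl hyr) hL
        refine Iso.swap (ihl r₂ hndl₁ hndr₂ hL ?_) (ihr l₂ hndr₁ hndl₂ hR ?_)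
        · exact tripchild l₁ r₂ (fun x hx => memt₁ x (Or.inl hx))
            (fun x hx => by simp [leafList]; exact Or.inr hx)
            (fun ha hc => induces_left hnd₁ ha hc)
            (fun ha hc => induces_right hnd₂ ha hc) hL
        · exact tripchild r₁ l₂ (fun x hx => memt₁ x (Or.inr hx))
            (fun x hx => by simp [leafList]; exact Or.inl hx)
            (fun ha hc => induces_right hnd₁ ha hc)
            (fun ha hc => induces_left hnd₂ ha hc) hR

end BTree

/-- a binary phylogenetic tree on a set `X` with at least 3 leaves is
uniquely determined, up to isomorphism preserving the leaf labels, by the set of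
rooted triplets it induces. -/
theorem stmt_0 {X : Type} [Fintype X] (t₁ t₂ : BTree X)
    (h₁ : t₁.IsPhyloOn) (h₂ : t₂.IsPhyloOn) (hX : 3 ≤ Fintype.card X)
    (htrip : ∀ a b c : X, t₁.Induces a b c ↔ t₂.Induces a b c) :
    BTree.Iso t₁ t₂ := by
  exact BTree.key t₁ t₂ h₁.1 h₂.1 (fun x => ⟨fun _ => h₂.2 x, fun _ => h₁.2 x⟩)
    (fun a b c _ _ _ => htrip a b c)
end

section
/- If T is a dense triplet set on a finite leaf set L (i.e., for every 3-element subset of L at least one triplet on that subset is in T), then the collection of maximal SN-sets of T forms a partition of L. -/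
/- A triplet `xy|z` on distinct leaves is represented as an ordered tuple `(x,y,z)`;
since `xy|z = yx|z`, triplet sets are assumed symmetric in the first two entries. -/

/-- The leaf set `L(T)` of a triplet set: all elements occurring in some triplet. -/
def leafSet {X : Type} (T : Set (X × X × X)) : Set X :=
  {x | ∃ a b c, (a, b, c) ∈ T ∧ (x = a ∨ x = b ∨ x = c)}

/-- `S ⊆ L(T)` is an SN-set if there is no triplet `xy|z ∈ T` with `x, z ∈ S` and `y ∉ S`. -/
def IsSN {X : Type} (T : Set (X × X × X)) (S : Set X) : Prop :=
  S ⊆ leafSet T ∧ ∀ a b c, (a, b, c) ∈ T → a ∈ S → c ∈ S → b ∈ S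

/-- A maximal SN-set: an SN-set `S ≠ L(T)` such that no SN-set `S' ≠ L(T)` properly contains it. -/
def IsMaxSN {X : Type} (T : Set (X × X × X)) (S : Set X) : Prop :=
  IsSN T S ∧ S ≠ leafSet T ∧
    ∀ S', IsSN T S' → S' ≠ leafSet T → S ⊆ S' → S' = S

/-- `T` is dense: for every 3-element subset of `L(T)` at least one triplet on it is in `T`. -/
def TripletDense {X : Type} (T : Set (X × X × X)) : Prop :=
  ∀ x y z, x ∈ leafSet T → y ∈ leafSet T → z ∈ leafSet T →
    x ≠ y → x ≠ z → y ≠ z → ((x, y, z) ∈ T ∨ (x, z, y) ∈ T ∨ (y, z, x) ∈ T)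

/-- if `T` is a dense triplet set on its (finite) leaf set, then the maximal
SN-sets of `T` cover the leaf set and are pairwise disjoint, i.e. they form a partition. -/
theorem stmt_5 {X : Type} [Fintype X] (T : Set (X × X × X))
    (hproper : ∀ a b c, (a, b, c) ∈ T → a ≠ b ∧ a ≠ c ∧ b ≠ c)
    (hsym : ∀ a b c, (a, b, c) ∈ T → (b, a, c) ∈ T)
    (hdense : TripletDense T) :
    (∀ x ∈ leafSet T, ∃ S, IsMaxSN T S ∧ x ∈ S) ∧
    (∀ S S', IsMaxSN T S → IsMaxSN T S' → S ≠ S' → Disjoint S S') := by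
  -- key lemma: two SN-sets with a common element are nested
  have nest : ∀ S1 S2 : Set X, IsSN T S1 → IsSN T S2 → (S1 ∩ S2).Nonempty →
      S1 ⊆ S2 ∨ S2 ⊆ S1 := by
    intro S1 S2 h1 h2 ⟨w, hw1, hw2⟩
    by_contra h
    push_neg at h
    obtain ⟨hn1, hn2⟩ := h
    obtain ⟨a, ha1, ha2⟩ := Set.not_subset.mp hn1
    obtain ⟨c, hc2, hc1⟩ := Set.not_subset.mp hn2
    have haL := h1.1 ha1
    have hcL := h2.1 hc2
    have hwL := h1.1 hw1
    have hac : a ≠ c := fun e => ha2 (e ▸ hc2)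
    have haw : a ≠ w := fun e => ha2 (e ▸ hw2)
    have hcw : c ≠ w := fun e => hc1 (e ▸ hw1)
    rcases hdense a c w haL hcL hwL hac haw hcw with ht | ht | ht
    · exact hc1 (h1.2 a c w ht ha1 hw1)
    · exact ha2 (h2.2 w a c (hsym a w c ht) hw2 hc2)
    · exact hc1 (h1.2 w c a (hsym c w a ht) hw1 ha1)
  constructor
  · intro x hx
    set 𝒮 : Set (Set X) := {S | IsSN T S ∧ S ≠ leafSet T ∧ x ∈ S} with h𝒮
    have hsingle : ({x} : Set X) ∈ 𝒮 := by
      refine ⟨⟨by simpa using hx, ?_⟩, ?_, rfl⟩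
      · intro a b c ht ha hc
        exact absurd ((Set.mem_singleton_iff.mp ha).trans (Set.mem_singleton_iff.mp hc).symm) (hproper a b c ht).2.1
      · obtain ⟨a, b, c, ht, _⟩ := hx
        obtain ⟨hab, hac, hbc⟩ := hproper a b c ht
        intro he
        have haL : a ∈ leafSet T := ⟨a, b, c, ht, Or.inl rfl⟩
        have hbL : b ∈ leafSet T := ⟨a, b, c, ht, Or.inr (Or.inl rfl)⟩
        rw [← he] at haL hbL
        exact hab ((Set.mem_singleton_iff.mp haL).trans
          (Set.mem_singleton_iff.mp hbL).symm)
    obtain ⟨S, hS, hmax⟩ := Set.Finite.exists_maximalFor (id : Set X → Set X) 𝒮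
      (Set.toFinite 𝒮) ⟨_, hsingle⟩
    refine ⟨S, ⟨hS.1, hS.2.1, ?_⟩, hS.2.2⟩
    intro S' hS' hne hsub
    exact Set.Subset.antisymm (hmax ⟨hS', hne, hsub hS.2.2⟩ hsub) hsub
  · intro S S' hS hS' hne
    rw [Set.disjoint_iff_inter_eq_empty]
    by_contra h
    rcases nest S S' hS.1 hS'.1 (Set.nonempty_iff_ne_empty.mpr h) with hsub | hsub
    · exact hne (hS.2.2 S' hS'.1 hS'.2.1 hsub).symm
    · exact hne (hS'.2.2 S hS.1 hS.2.1 hsub)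
end

section
/- For any triplet set T with leaf set L, the set L itself and every singleton subset of L are SN-sets of T, and the intersection of two SN-sets of a dense triplet set is an SN-set. -/
/-- for any triplet set `T` with leaf set `L`, the set `L` itself and every
singleton subset of `L` are SN-sets of `T`; and if `T` is dense, the intersection of any
two SN-sets of `T` is again an SN-set. -/
theorem stmt_6 {X : Type} (T : Set (X × X × X))
    (hproper : ∀ a b c, (a, b, c) ∈ T → a ≠ b ∧ a ≠ c ∧ b ≠ c)
    (hsym : ∀ a b c, (a, b, c) ∈ T → (b, a, c) ∈ T) :
    IsSN T (leafSet T) ∧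
    (∀ x ∈ leafSet T, IsSN T {x}) ∧
    (TripletDense T → ∀ S S', IsSN T S → IsSN T S' → IsSN T (S ∩ S')) := by
  refine ⟨⟨le_refl _, fun a b c h _ _ => ⟨a, b, c, h, Or.inr (Or.inl rfl)⟩⟩, ?_, ?_⟩
  · intro x hx
    refine ⟨fun y hy => by rwa [Set.mem_singleton_iff.mp hy], fun a b c h ha hc => ?_⟩
    exact absurd ((Set.mem_singleton_iff.mp ha).trans (Set.mem_singleton_iff.mp hc).symm)
      (hproper a b c h).2.1
  · intro _ S S' hS hS'
    exact ⟨fun x hx => hS.1 hx.1, fun a b c h ha hc =>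
      ⟨hS.2 a b c h ha.1 hc.1, hS'.2 a b c h ha.2 hc.2⟩⟩
end

section
/- Let N be a level-1 network and let a = (u,v) be an arc of N with v not a reticulation. If v is not a leaf and u is not a reticulation, then contracting the arc a (identifying u and v) yields a DAG N' that is again a level-1 network, and every triplet consistent with N' is consistent with N. -/
section Graph
variable {V : Type}

/-- `IsWalk arc a l b`: `l` is the list of successive vertices (after `a`) of a directed
walk from `a` to `b`; the full vertex sequence of the walk is `a :: l`. -/
def IsWalk (arc : V → V → Prop) : V → List V → V → Prop
  | a, [], b => a = b
  | a, x :: xs, b => arc a x ∧ IsWalk arc x xs b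

/-- The walks `a :: l` (to `b`) and `a' :: m` (to `b'`) are internally vertex-disjoint:
no internal vertex of one occurs anywhere on the other. -/
def IntDisj (a : V) (l : List V) (a' : V) (m : List V) : Prop :=
  (∀ w ∈ l.dropLast, w ∉ a' :: m) ∧ (∀ w ∈ m.dropLast, w ∉ a :: l)

/-- The triplet `xy|z` is consistent with the digraph `arc`: there are distinct vertices
`u, v` and pairwise internally vertex-disjoint directed paths `u → x`, `u → y`,
`v → u` and `v → z`. -/
def Consistent (arc : V → V → Prop) (x y z : V) : Prop :=
  ∃ (u v : V) (l₁ l₂ l₃ l₄ : List V),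
    u ≠ v ∧
    IsWalk arc u l₁ x ∧ IsWalk arc u l₂ y ∧ IsWalk arc v l₃ u ∧ IsWalk arc v l₄ z ∧
    IntDisj u l₁ u l₂ ∧ IntDisj u l₁ v l₃ ∧ IntDisj u l₁ v l₄ ∧
    IntDisj u l₂ v l₃ ∧ IntDisj u l₂ v l₄ ∧ IntDisj v l₃ v l₄

/-- All of `S` is connected inside `S` in the underlying undirected graph. -/
def ConnWithin (arc : V → V → Prop) (S : Set V) : Prop :=
  ∀ a ∈ S, ∀ b ∈ S,
    Relation.ReflTransGen (fun x y => (arc x y ∨ arc y x) ∧ x ∈ S ∧ y ∈ S) a b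

/-- `S` induces a biconnected subgraph: connected with no cut vertex. -/
def Biconn (arc : V → V → Prop) (S : Set V) : Prop :=
  ConnWithin arc S ∧ ∀ x ∈ S, ConnWithin arc (S \ {x})

/-- A biconnected component: a maximal biconnected subgraph. -/
def IsBlock (arc : V → V → Prop) (S : Set V) : Prop :=
  Biconn arc S ∧ ∀ S', Biconn arc S' → S ⊆ S' → S' = S

/-- A reticulation: a vertex of indegree at least 2. -/
def IsRetic (arc : V → V → Prop) (v : V) : Prop :=
  ∃ a b, a ≠ b ∧ arc a v ∧ arc b v

/-- No vertex has three distinct in-neighbours. -/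
def SemiBinary (arc : V → V → Prop) : Prop :=
  ∀ v a b c, arc a v → arc b v → arc c v → a = b ∨ a = c ∨ b = c

/-- Each biconnected component contains at most one reticulation. -/
def Level1Blocks (arc : V → V → Prop) : Prop :=
  ∀ S, IsBlock arc S → ∀ r₁ r₂, r₁ ∈ S → r₂ ∈ S →
    IsRetic arc r₁ → IsRetic arc r₂ → r₁ = r₂

end Graph

/-- A phylogenetic network on `X`: a single-rooted DAG whose leaves are bijectively
labelled by `X`. -/
structure PhyloNet (X : Type) where
  V : Type
  arc : V → V → Prop
  root : V
  leafOf : X → V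
  leafOf_inj : Function.Injective leafOf
  leaf_iff : ∀ v, (∀ w, ¬ arc v w) ↔ ∃ x, v = leafOf x
  root_no_in : ∀ w, ¬ arc w root
  reach : ∀ v, Relation.ReflTransGen arc root v
  acyclic : ∀ v, ¬ Relation.TransGen arc v v

def PhyloNet.Level1 {X : Type} (N : PhyloNet X) : Prop :=
  SemiBinary N.arc ∧ Level1Blocks N.arc

section WalkLemmas
variable {V : Type} {arc : V → V → Prop}

theorem walk_append {a b c : V} {L M : List V} (h1 : IsWalk arc a L b)
    (h2 : IsWalk arc b M c) : IsWalk arc a (L ++ M) c := by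
  induction L generalizing a with
  | nil => cases h1; simpa using h2
  | cons x xs ih => exact ⟨h1.1, ih h1.2⟩

theorem walk_transGen {a b : V} {L : List V} (h : IsWalk arc a L b) (hne : L ≠ []) :
    Relation.TransGen arc a b := by
  induction L generalizing a with
  | nil => exact absurd rfl hne
  | cons x xs ih =>
    rcases xs with _ | ⟨y, ys⟩
    · cases h.2; exact Relation.TransGen.single h.1
    · exact (ih h.2 (by simp)).head h.1

theorem walk_end {a b : V} {L : List V} (h : IsWalk arc a L b) (hne : L ≠ []) :
    L = L.dropLast ++ [b] := by
  induction L generalizing a with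
  | nil => exact absurd rfl hne
  | cons x xs ih =>
    rcases xs with _ | ⟨y, ys⟩
    · cases h.2; rfl
    · have := ih h.2 (by simp)
      rw [List.dropLast_cons_of_ne_nil (by simp)]
      simpa using this

theorem walk_decomp {a b w : V} {L : List V} (h : IsWalk arc a L b) (hw : w ∈ L) :
    ∃ L₁ L₂, L = L₁ ++ w :: L₂ ∧ IsWalk arc a (L₁ ++ [w]) w ∧ IsWalk arc w L₂ b ∧ w ∉ L₁ := by
  induction L generalizing a with
  | nil => simp at hw
  | cons x xs ih =>
    by_cases hx : w = x
    · subst hx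
      exact ⟨[], xs, rfl, ⟨h.1, rfl⟩, h.2, by simp⟩
    · have hw' : w ∈ xs := by
        rcases List.mem_cons.1 hw with h' | h'
        · exact absurd h' hx
        · exact h'
      obtain ⟨L₁, L₂, hL, hw1, hw2, hnm⟩ := ih h.2 hw'
      exact ⟨x :: L₁, L₂, by simp [hL], ⟨h.1, hw1⟩, hw2, by
        simp only [List.mem_cons, not_or]; exact ⟨hx, hnm⟩⟩

end WalkLemmas

section ConLemmas
variable {V V' : Type}

/-- Context for arc contraction. -/
structure Ctr (arc : V → V → Prop) (arc' : V' → V' → Prop) (φ : V → V') (ψ : V' → V)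
    (u v : V) : Prop where
  hne : u ≠ v
  hpsi : ∀ y', φ (ψ y') = y'
  hcol : φ u = φ v
  huv : arc u v
  hinj : ∀ a b, φ a = φ b → a = b ∨ ((a = u ∨ a = v) ∧ (b = u ∨ b = v))
  harc : ∀ a' b', arc' a' b' ↔ ∃ a b, φ a = a' ∧ φ b = b' ∧ arc a b ∧ φ a ≠ φ b
  hv_nr : ¬ IsRetic arc v
  hu_nr : ¬ IsRetic arc u

variable {arc : V → V → Prop} {arc' : V' → V' → Prop} {φ : V → V'} {ψ : V' → V} {u v : V}
variable (C : Ctr arc arc' φ ψ u v)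
include C

theorem Ctr.phi_m {a : V} (h : a = u ∨ a = v) : φ a = φ u := by
  rcases h with rfl | rfl
  · rfl
  · exact C.hcol.symm

theorem Ctr.m_phi {a : V} (h : φ a = φ u) : a = u ∨ a = v := by
  rcases C.hinj a u h with rfl | ⟨h1, _⟩
  · exact Or.inl rfl
  · exact h1

theorem Ctr.uniq {a : V} {y' : V'} (h : φ a = y') (hy : y' ≠ φ u) : a = ψ y' := by
  rcases C.hinj a (ψ y') (by rw [h, C.hpsi]) with h' | ⟨h1, h2⟩
  · exact h'
  · exact absurd (h ▸ C.phi_m h1) hy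

theorem Ctr.psi_ne {y' : V'} (hy : y' ≠ φ u) : ψ y' ≠ u ∧ ψ y' ≠ v := by
  constructor <;> intro h <;> apply hy
  · rw [← C.hpsi y', h]
  · rw [← C.hpsi y', h, ← C.hcol]

theorem Ctr.into_v {a : V} (h : arc a v) : a = u := by
  by_contra hne
  exact C.hv_nr ⟨a, u, hne, h, C.huv⟩

theorem Ctr.arc'_intro {a b : V} (h : arc a b) (hne : φ a ≠ φ b) : arc' (φ a) (φ b) :=
  (C.harc _ _).2 ⟨a, b, rfl, rfl, h, hne⟩

theorem Ctr.not_mm {y' : V'} (h : arc' (φ u) y') : y' ≠ φ u := by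
  rintro rfl
  obtain ⟨a, b, ha, hb, -, hne⟩ := (C.harc _ _).1 h
  exact hne (ha.trans hb.symm)

theorem Ctr.real_nn {x' y' : V'} (h : arc' x' y') (hx : x' ≠ φ u) (hy : y' ≠ φ u) :
    arc (ψ x') (ψ y') := by
  obtain ⟨a, b, ha, hb, hab, -⟩ := (C.harc _ _).1 h
  rw [← C.uniq ha hx, ← C.uniq hb hy]; exact hab

theorem Ctr.real_to {x' : V'} (h : arc' x' (φ u)) (hx : x' ≠ φ u) : arc (ψ x') u := by
  obtain ⟨a, b, ha, hb, hab, hne⟩ := (C.harc _ _).1 h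
  rcases C.m_phi hb with rfl | rfl
  · rw [← C.uniq ha hx]; exact hab
  · have hau := C.into_v hab
    subst hau
    exact absurd (ha.symm.trans rfl) hx

theorem Ctr.real_from {y' : V'} (h : arc' (φ u) y') (hy : y' ≠ φ u) :
    arc u (ψ y') ∨ arc v (ψ y') := by
  obtain ⟨a, b, ha, hb, hab, -⟩ := (C.harc _ _).1 h
  have hb' := C.uniq hb hy
  rcases C.m_phi ha with rfl | rfl
  · exact Or.inl (hb' ▸ hab)
  · exact Or.inr (hb' ▸ hab)

theorem Ctr.lift_free {a' b' : V'} {L : List V'} (h : IsWalk arc' a' L b')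
    (ha : a' ≠ φ u) (hL : ∀ w ∈ L, w ≠ φ u) :
    IsWalk arc (ψ a') (L.map ψ) (ψ b') := by
  induction L generalizing a' with
  | nil => cases h; rfl
  | cons x xs ih =>
    exact ⟨C.real_nn h.1 ha (hL x (by simp)), ih h.2 (hL x (by simp)) fun w hw => hL w (by simp [hw])⟩

theorem Ctr.lift_toM {a' : V'} {L : List V'} (h : IsWalk arc' a' (L ++ [φ u]) (φ u))
    (ha : a' ≠ φ u) (hL : ∀ w ∈ L, w ≠ φ u) :
    IsWalk arc (ψ a') (L.map ψ ++ [u]) u := by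
  induction L generalizing a' with
  | nil => exact ⟨C.real_to h.1 ha, rfl⟩
  | cons x xs ih =>
    exact ⟨C.real_nn h.1 ha (hL x (by simp)), ih h.2 (hL x (by simp)) fun w hw => hL w (by simp [hw])⟩

theorem Ctr.lift_fromM {b' x : V'} {xs : List V'} (h : IsWalk arc' (φ u) (x :: xs) b')
    (hL : ∀ w ∈ x :: xs, w ≠ φ u) :
    (arc u (ψ x) ∨ arc v (ψ x)) ∧ IsWalk arc (ψ x) (xs.map ψ) (ψ b') :=
  ⟨C.real_from h.1 (hL x (by simp)),
    C.lift_free h.2 (hL x (by simp)) fun w hw => hL w (by simp [hw])⟩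

theorem Ctr.mem_map_phi {w : V} {L : List V'} (h : w ∈ L.map ψ) : φ w ∈ L := by
  obtain ⟨w', hw', rfl⟩ := List.mem_map.1 h
  rw [C.hpsi]; exact hw'

theorem Ctr.noUV {w : V} {L : List V'} (h : w ∈ L.map ψ) (hL : ∀ w' ∈ L, w' ≠ φ u) :
    w ≠ u ∧ w ≠ v := by
  obtain ⟨w', hw', rfl⟩ := List.mem_map.1 h
  exact C.psi_ne (hL w' hw')

omit C in
theorem intdisj_crit {a' b' : V'} {L' M' : List V'} {a₀ b₀ : V} {L₀ M₀ : List V}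
    (hd : IntDisj a' L' b' M')
    (h1 : ∀ w ∈ L₀.dropLast, φ w ∈ L'.dropLast ∨ w ∉ b₀ :: M₀)
    (h2 : ∀ w ∈ M₀.dropLast, φ w ∈ M'.dropLast ∨ w ∉ a₀ :: L₀)
    (hφL : ∀ w ∈ a₀ :: L₀, φ w ∈ a' :: L') (hφM : ∀ w ∈ b₀ :: M₀, φ w ∈ b' :: M') :
    IntDisj a₀ L₀ b₀ M₀ := by
  constructor
  · intro w hw hmem
    rcases h1 w hw with h | h
    · exact hd.1 (φ w) h (hφM w hmem)
    · exact h hmem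
  · intro w hw hmem
    rcases h2 w hw with h | h
    · exact hd.2 (φ w) h (hφL w hmem)
    · exact h hmem

omit C in
theorem intdisj_comm {a b : V} {l m : List V} (h : IntDisj a l b m) : IntDisj b m a l :=
  ⟨h.2, h.1⟩

omit C in
theorem consistent_comm {x y z : V} (h : Consistent arc x y z) : Consistent arc y x z := by
  obtain ⟨p, q, l₁, l₂, l₃, l₄, h0, h1, h2, h3, h4, d12, d13, d14, d23, d24, d34⟩ := h
  exact ⟨p, q, l₂, l₁, l₃, l₄, h0, h2, h1, h3, h4, intdisj_comm d12, d23, d24, d13, d14, d34⟩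

end ConLemmas

section ChainLemmas
variable {V : Type} {arc : V → V → Prop}

/-- The step relation of `ConnWithin`. -/
def Chain (arc : V → V → Prop) (S : Set V) (a b : V) : Prop :=
  Relation.ReflTransGen (fun x y => (arc x y ∨ arc y x) ∧ x ∈ S ∧ y ∈ S) a b

theorem connWithin_def {S : Set V} :
    ConnWithin arc S ↔ ∀ a ∈ S, ∀ b ∈ S, Chain arc S a b := Iff.rfl

theorem chain_symm {S : Set V} {a b : V} (h : Chain arc S a b) : Chain arc S b a := by
  unfold Chain at h ⊢
  induction h with
  | refl => exact Relation.ReflTransGen.refl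
  | tail _ hbc ih => exact Relation.ReflTransGen.head ⟨hbc.1.symm, hbc.2.2, hbc.2.1⟩ ih

theorem chain_mono {S T : Set V} (hST : S ⊆ T) {a b : V} (h : Chain arc S a b) :
    Chain arc T a b := by
  unfold Chain at h ⊢
  induction h with
  | refl => exact Relation.ReflTransGen.refl
  | tail _ hbc ih => exact Relation.ReflTransGen.tail ih ⟨hbc.1, hST hbc.2.1, hST hbc.2.2⟩

theorem chain_single {S : Set V} {a b : V} (e : arc a b ∨ arc b a) (ha : a ∈ S) (hb : b ∈ S) :
    Chain arc S a b :=
  Relation.ReflTransGen.single ⟨e, ha, hb⟩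

theorem biconn_block {S : Set V} (h : Biconn arc S) : ∃ B, IsBlock arc B ∧ S ⊆ B := by
  have hz : ∀ c ⊆ {T | Biconn arc T ∧ S ⊆ T}, IsChain (· ⊆ ·) c → c.Nonempty →
      ∃ ub ∈ {T | Biconn arc T ∧ S ⊆ T}, ∀ s ∈ c, s ⊆ ub := by
    intro c hc hchain hne
    refine ⟨⋃₀ c, ⟨⟨?_, ?_⟩, ?_⟩, fun s hs => Set.subset_sUnion_of_mem hs⟩
    · rintro a ⟨Ta, hTa, haT⟩ b ⟨Tb, hTb, hbT⟩
      rcases hchain.total hTa hTb with hab | hab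
      · exact chain_mono (Set.subset_sUnion_of_mem hTb) ((hc hTb).1.1 a (hab haT) b hbT)
      · exact chain_mono (Set.subset_sUnion_of_mem hTa) ((hc hTa).1.1 a haT b (hab hbT))
    · rintro x ⟨Tx, hTx, hxT⟩ a ⟨⟨Ta, hTa, haT⟩, hax⟩ b ⟨⟨Tb, hTb, hbT⟩, hbx⟩
      rcases hchain.total hTa hTb with hab | hab
      · rcases hchain.total hTb hTx with h2 | h2
        · exact chain_mono (Set.diff_subset_diff_left (Set.subset_sUnion_of_mem hTx))
            ((hc hTx).1.2 x hxT a ⟨h2 (hab haT), hax⟩ b ⟨h2 hbT, hbx⟩)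
        · exact chain_mono (Set.diff_subset_diff_left (Set.subset_sUnion_of_mem hTb))
            ((hc hTb).1.2 x (h2 hxT) a ⟨hab haT, hax⟩ b ⟨hbT, hbx⟩)
      · rcases hchain.total hTa hTx with h2 | h2
        · exact chain_mono (Set.diff_subset_diff_left (Set.subset_sUnion_of_mem hTx))
            ((hc hTx).1.2 x hxT a ⟨h2 haT, hax⟩ b ⟨h2 (hab hbT), hbx⟩)
        · exact chain_mono (Set.diff_subset_diff_left (Set.subset_sUnion_of_mem hTa))
            ((hc hTa).1.2 x (h2 hxT) a ⟨haT, hax⟩ b ⟨hab hbT, hbx⟩)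
    · rcases hne with ⟨T, hT⟩
      exact (hc hT).2.trans (Set.subset_sUnion_of_mem hT)
  obtain ⟨B, hSB, hmax⟩ := zorn_subset_nonempty _ hz S ⟨h, subset_rfl⟩
  refine ⟨B, ⟨hmax.1.1, ?_⟩, hmax.1.2⟩
  intro S₂ hS₂ hBS₂
  exact le_antisymm (hmax.2 ⟨hS₂, hmax.1.2.trans hBS₂⟩ hBS₂) hBS₂

end ChainLemmas

section Transfer
variable {V V' : Type} {arc : V → V → Prop} {arc' : V' → V' → Prop}

theorem chain_transfer {S'' : Set V'} {S : Set V} (r : V' → V)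
    (hstep : ∀ x' y', arc' x' y' → x' ∈ S'' → y' ∈ S'' → Chain arc S (r x') (r y'))
    {a' b' : V'} (h : Chain arc' S'' a' b') : Chain arc S (r a') (r b') := by
  induction h with
  | refl => exact Relation.ReflTransGen.refl
  | tail h₁ h₂ ih =>
    rcases h₂ with ⟨(e | e), hx, hy⟩
    · exact ih.trans (hstep _ _ e hx hy)
    · exact ih.trans (chain_symm (hstep _ _ e hy hx))

end Transfer

section CtrMain
variable {V V' : Type} {arc : V → V → Prop} {arc' : V' → V' → Prop} {φ : V → V'} {ψ : V' → V}
  {u v : V}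
variable (C : Ctr arc arc' φ ψ u v)
include C

theorem Ctr.acyc (hacyc : ∀ w, ¬ Relation.TransGen arc w w) :
    ∀ w', ¬ Relation.TransGen arc' w' w' := by
  classical
  set r : V' → V := fun y' => if y' = φ u then u else ψ y' with hr
  have step : ∀ x' y', arc' x' y' → Relation.TransGen arc (r x') (r y') := by
    intro x' y' h
    obtain ⟨a, b, ha, hb, hab, hne⟩ := (C.harc _ _).1 h
    have hb' : r y' = b := by
      by_cases hy : y' = φ u
      · subst hy
        rcases C.m_phi hb with hbu | hbv
        · simp [hr, hbu]
        · have hau : a = u := C.into_v (by rw [← hbv]; exact hab)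
          exact absurd (show φ a = φ b by rw [hau, hbv]; exact C.hcol) hne
      · simp only [hr, if_neg hy]; exact (C.uniq hb hy).symm
    rw [hb']
    by_cases hx : x' = φ u
    · subst hx
      rcases C.m_phi ha with hau | hav
      · rw [hau] at hab
        simpa [hr] using Relation.TransGen.single hab
      · rw [hav] at hab
        simp only [hr, if_pos rfl]
        exact (Relation.TransGen.single hab).head C.huv
    · simp only [hr, if_neg hx]
      rw [← C.uniq ha hx]
      exact Relation.TransGen.single hab
  have lift : ∀ {a' b' : V'}, Relation.TransGen arc' a' b' →
      Relation.TransGen arc (r a') (r b') := by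
    intro a' b' h
    induction h with
    | single h => exact step _ _ h
    | tail _ h ih => exact ih.trans (step _ _ h)
  intro w' hw
  exact hacyc (r w') (lift hw)

theorem Ctr.rtg_up {a b : V} (h : Relation.ReflTransGen arc a b) :
    Relation.ReflTransGen arc' (φ a) (φ b) := by
  induction h with
  | refl => exact Relation.ReflTransGen.refl
  | @tail b c _ h ih =>
    by_cases he : φ b = φ c
    · exact he ▸ ih
    · exact ih.tail (C.arc'_intro h he)

theorem Ctr.semibinary (hsb : SemiBinary arc) : SemiBinary arc' := by
  intro w' a' b' c' h1 h2 h3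
  obtain ⟨p₁, q₁, hp₁, hq₁, h₁, hn₁⟩ := (C.harc _ _).1 h1
  obtain ⟨p₂, q₂, hp₂, hq₂, h₂, hn₂⟩ := (C.harc _ _).1 h2
  obtain ⟨p₃, q₃, hp₃, hq₃, h₃, hn₃⟩ := (C.harc _ _).1 h3
  by_cases hw : w' = φ u
  · subst hw
    have key : ∀ p q : V, φ p ≠ φ q → φ q = φ u → arc p q → arc p u := by
      intro p q hn hq hpq
      rcases C.m_phi hq with hqu | hqv
      · exact hqu ▸ hpq
      · have hau : p = u := C.into_v (by rw [← hqv]; exact hpq)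
        exact absurd (show φ p = φ q by rw [hau, hqv]; exact C.hcol) hn
    have k₁ := key p₁ q₁ hn₁ hq₁ h₁
    have k₂ := key p₂ q₂ hn₂ hq₂ h₂
    have : p₁ = p₂ := by
      by_contra hne
      exact C.hu_nr ⟨p₁, p₂, hne, k₁, k₂⟩
    exact Or.inl (hp₁ ▸ hp₂ ▸ congrArg φ this)
  · have e₁ := C.uniq hq₁ hw
    have e₂ := C.uniq hq₂ hw
    have e₃ := C.uniq hq₃ hw
    rcases hsb (ψ w') p₁ p₂ p₃ (e₁ ▸ h₁) (e₂ ▸ h₂) (e₃ ▸ h₃) with h | h | h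
    · exact Or.inl (hp₁ ▸ hp₂ ▸ congrArg φ h)
    · exact Or.inr (Or.inl (hp₁ ▸ hp₃ ▸ congrArg φ h))
    · exact Or.inr (Or.inr (hp₂ ▸ hp₃ ▸ congrArg φ h))

theorem Ctr.retic_down {w' : V'} (h : IsRetic arc' w') :
    w' ≠ φ u ∧ IsRetic arc (ψ w') := by
  obtain ⟨a', b', hne, h1, h2⟩ := h
  obtain ⟨p₁, q₁, hp₁, hq₁, h₁, hn₁⟩ := (C.harc _ _).1 h1
  obtain ⟨p₂, q₂, hp₂, hq₂, h₂, hn₂⟩ := (C.harc _ _).1 h2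
  have key : ∀ p q : V, φ p ≠ φ q → φ q = φ u → arc p q → arc p u := by
    intro p q hn hq hpq
    rcases C.m_phi hq with hqu | hqv
    · exact hqu ▸ hpq
    · have hau : p = u := C.into_v (by rw [← hqv]; exact hpq)
      exact absurd (show φ p = φ q by rw [hau, hqv]; exact C.hcol) hn
  have hpne : p₁ ≠ p₂ := fun h => hne (hp₁ ▸ hp₂ ▸ congrArg φ h)
  constructor
  · intro hw
    subst hw
    exact C.hu_nr ⟨p₁, p₂, hpne, key p₁ q₁ hn₁ hq₁ h₁, key p₂ q₂ hn₂ hq₂ h₂⟩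
  · by_cases hw : w' = φ u
    · exact absurd hw (by
        intro h'
        exact C.hu_nr ⟨p₁, p₂, hpne, key p₁ q₁ hn₁ (hq₁.trans h') h₁, key p₂ q₂ hn₂ (hq₂.trans h') h₂⟩)
    · exact ⟨p₁, p₂, hpne, C.uniq hq₁ hw ▸ h₁, C.uniq hq₂ hw ▸ h₂⟩

end CtrMain

section CtrBlocks
variable {V V' : Type} {arc : V → V → Prop} {arc' : V' → V' → Prop} {φ : V → V'} {ψ : V' → V}
  {u v : V}
variable (C : Ctr arc arc' φ ψ u v)
include C

theorem Ctr.chain_up {S'' : Set V'} {S : Set V} {anchor : V} (r : V' → V)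
    (hr1 : r (φ u) = anchor) (hr2 : ∀ y', y' ≠ φ u → r y' = ψ y')
    (hin : ∀ y' ∈ S'', y' ≠ φ u → ψ y' ∈ S)
    (hto : ∀ x' ∈ S'', x' ≠ φ u → arc' x' (φ u) → φ u ∈ S'' → Chain arc S (ψ x') anchor)
    (hfrom : ∀ y' ∈ S'', y' ≠ φ u → arc' (φ u) y' → φ u ∈ S'' → Chain arc S anchor (ψ y'))
    {a' b' : V'} (h : Chain arc' S'' a' b') : Chain arc S (r a') (r b') := by
  refine chain_transfer r ?_ h
  intro x' y' e hx hy
  by_cases hxm : x' = φ u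
  · have hym : y' ≠ φ u := C.not_mm (hxm ▸ e)
    rw [hxm, hr1, hr2 y' hym]
    exact hfrom y' hy hym (hxm ▸ e) (hxm ▸ hx)
  · by_cases hym : y' = φ u
    · rw [hym, hr1, hr2 x' hxm]
      exact hto x' hx hxm (hym ▸ e) (hym ▸ hy)
    · rw [hr2 x' hxm, hr2 y' hym]
      exact chain_single (Or.inl (C.real_nn e hxm hym)) (hin _ hx hxm) (hin _ hy hym)

theorem Ctr.conn_up {S'' : Set V'} {S : Set V} (anchor : V)
    (hconn : ∀ a' ∈ S'', ∀ b' ∈ S'', Chain arc' S'' a' b')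
    (hin : ∀ y' ∈ S'', y' ≠ φ u → ψ y' ∈ S)
    (hto : ∀ x' ∈ S'', x' ≠ φ u → arc' x' (φ u) → φ u ∈ S'' → Chain arc S (ψ x') anchor)
    (hfrom : ∀ y' ∈ S'', y' ≠ φ u → arc' (φ u) y' → φ u ∈ S'' → Chain arc S anchor (ψ y'))
    (hproj : ∀ a ∈ S, φ a ∈ S'')
    (hend : ∀ a ∈ S, φ a = φ u → Chain arc S a anchor) :
    ConnWithin arc S := by
  classical
  intro a ha b hb
  set r : V' → V := fun y' => if y' = φ u then anchor else ψ y' with hrdef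
  have hr1 : r (φ u) = anchor := by simp [hrdef]
  have hr2 : ∀ y', y' ≠ φ u → r y' = ψ y' := fun y' hy => by simp [hrdef, hy]
  have h2 := C.chain_up r hr1 hr2 hin hto hfrom
    (hconn (φ a) (hproj a ha) (φ b) (hproj b hb))
  have key : ∀ c ∈ S, Chain arc S c (r (φ c)) := by
    intro c hc
    by_cases h : φ c = φ u
    · rw [h, hr1]; exact hend c hc h
    · rw [hr2 _ h, ← C.uniq rfl h]
      exact Relation.ReflTransGen.refl
  exact ((key a ha).trans h2).trans (chain_symm (key b hb))

theorem Ctr.biconn_up {S' : Set V'} (hB : Biconn arc' S') :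
    ∃ S : Set V, Biconn arc S ∧ ∀ w : V, φ w ∈ S' → w ≠ u → w ≠ v → w ∈ S := by
  classical
  set W : Set V := {w | φ w ∈ S' ∧ w ≠ u ∧ w ≠ v} with hWdef
  have hpsiW : ∀ y' ∈ S', y' ≠ φ u → ψ y' ∈ W := by
    intro y' hy hym
    exact ⟨by rw [C.hpsi]; exact hy, (C.psi_ne hym).1, (C.psi_ne hym).2⟩
  have hWm : ∀ w ∈ W, φ w ≠ φ u := by
    intro w hw h
    rcases C.m_phi h with h' | h'
    · exact hw.2.1 h'
    · exact hw.2.2 h'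
  have hWx : ∀ x ∈ W, ∀ y', y' ≠ φ x → ψ y' ≠ x := by
    intro x hx y' hne h
    exact hne (by rw [← h, C.hpsi])
  have hprojW : ∀ x ∈ W, ∀ a ∈ W, a ≠ x → φ a ≠ φ x := by
    intro x hx a ha hax h
    rcases C.hinj a x h with h' | ⟨h', _⟩
    · exact hax h'
    · rcases h' with rfl | rfl
      · exact ha.2.1 rfl
      · exact ha.2.2 rfl
  have mfree : ∀ (S'' : Set V') (S : Set V), φ u ∉ S'' →
      (∀ y' ∈ S'', y' ≠ φ u → ψ y' ∈ S) →
      (∀ a' ∈ S'', ∀ b' ∈ S'', Chain arc' S'' a' b') →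
      ∀ c ∈ W, φ c ∈ S'' → ∀ d ∈ W, φ d ∈ S'' → Chain arc S c d := by
    intro S'' S hmS hin hconn c hc hc' d hd hd'
    set r : V' → V := fun y' => if y' = φ u then u else ψ y' with hrdef
    have h2 := C.chain_up (anchor := u) r (by simp [hrdef]) (fun y' hy => by simp [hrdef, hy])
      hin (fun _ _ _ _ hmem => absurd hmem hmS) (fun _ _ _ _ hmem => absurd hmem hmS)
      (hconn (φ c) hc' (φ d) hd')
    have ec : r (φ c) = c := by
      rw [hrdef]; simp only [if_neg (hWm c hc)]
      exact (C.uniq rfl (hWm c hc)).symm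
    have ed : r (φ d) = d := by
      rw [hrdef]; simp only [if_neg (hWm d hd)]
      exact (C.uniq rfl (hWm d hd)).symm
    rwa [ec, ed] at h2
  by_cases hm : φ u ∈ S'
  · by_cases hu_nb : ∃ w ∈ W, arc w u ∨ arc u w
    · by_cases hv_nb : ∃ w ∈ W, arc v w
      · -- S = W ∪ {u, v}
        obtain ⟨w₀, hw₀W, hw₀⟩ := hv_nb
        obtain ⟨w₁, hw₁W, hw₁⟩ := hu_nb
        set S : Set V := W ∪ {u, v} with hSdef
        have hWS : W ⊆ S := Set.subset_union_left
        have huS : u ∈ S := Or.inr (Or.inl rfl)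
        have hvS : v ∈ S := Or.inr (Or.inr rfl)
        refine ⟨S, ⟨?_, ?_⟩, fun w h h1 h2 => hWS ⟨h, h1, h2⟩⟩
        · refine C.conn_up u hB.1 (fun y' hy hym => hWS (hpsiW y' hy hym)) ?_ ?_ ?_ ?_
          · intro x' hx hxm e _
            exact chain_single (Or.inl (C.real_to e hxm)) (hWS (hpsiW x' hx hxm)) huS
          · intro y' hy hym e _
            rcases C.real_from e hym with h | h
            · exact chain_single (Or.inl h) huS (hWS (hpsiW y' hy hym))
            · exact (chain_single (Or.inl C.huv) huS hvS).trans
                (chain_single (Or.inl h) hvS (hWS (hpsiW y' hy hym)))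
          · rintro a (ha | ha | ha)
            · exact ha.1
            · rw [ha]; exact hm
            · rw [Set.mem_singleton_iff.1 ha, ← C.hcol]; exact hm
          · rintro a (ha | ha | ha) hphi
            · exact absurd hphi (hWm a ha)
            · rw [ha]; exact Relation.ReflTransGen.refl
            · rw [Set.mem_singleton_iff.1 ha]
              exact chain_single (Or.inr C.huv) hvS huS
        · intro x hxS
          rcases hxS with hxW | hxu | hxv
          · -- cut x ∈ W
            refine C.conn_up u (hB.2 (φ x) hxW.1) ?_ ?_ ?_ ?_ ?_
            · intro y' hy hym
              exact ⟨hWS (hpsiW y' hy.1 hym), hWx x hxW y' hy.2⟩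
            · intro x' hx hxm e _
              exact chain_single (Or.inl (C.real_to e hxm))
                ⟨hWS (hpsiW x' hx.1 hxm), hWx x hxW x' hx.2⟩ ⟨huS, fun h => hxW.2.1 h.symm⟩
            · intro y' hy hym e _
              have hu' : u ∈ S \ {x} := ⟨huS, fun h => hxW.2.1 h.symm⟩
              have hv' : v ∈ S \ {x} := ⟨hvS, fun h => hxW.2.2 h.symm⟩
              rcases C.real_from e hym with h | h
              · exact chain_single (Or.inl h) hu' ⟨hWS (hpsiW y' hy.1 hym), hWx x hxW y' hy.2⟩
              · exact (chain_single (Or.inl C.huv) hu' hv').trans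
                  (chain_single (Or.inl h) hv' ⟨hWS (hpsiW y' hy.1 hym), hWx x hxW y' hy.2⟩)
            · rintro a ⟨(ha | ha | ha), hax⟩
              · exact ⟨ha.1, hprojW x hxW a ha hax⟩
              · rw [ha]; exact ⟨hm, fun h => hWm x hxW h.symm⟩
              · rw [Set.mem_singleton_iff.1 ha, ← C.hcol]
                exact ⟨hm, fun h => hWm x hxW h.symm⟩
            · rintro a ⟨(ha | ha | ha), hax⟩ hphi
              · exact absurd hphi (hWm a ha)
              · rw [ha]; exact Relation.ReflTransGen.refl
              · rw [Set.mem_singleton_iff.1 ha]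
                exact chain_single (Or.inr C.huv) ⟨hvS, fun h => hxW.2.2 h.symm⟩
                  ⟨huS, fun h => hxW.2.1 h.symm⟩
          · -- cut x = u
            subst hxu
            intro a ha b hb
            have hWsub : W ⊆ S \ {x} := fun w hw => ⟨hWS hw, hw.2.1⟩
            have core := mfree (S' \ {φ x}) (S \ {x}) (fun h => h.2 rfl)
              (fun y' hy hym => hWsub (hpsiW y' hy.1 hym)) (hB.2 (φ x) hm)
            have fix : ∀ c, c ∈ S \ {x} → ∃ c', c' ∈ W ∧ Chain arc (S \ {x}) c c' := by
              rintro c ⟨(hc | hc | hc), hcx⟩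
              · exact ⟨c, hc, Relation.ReflTransGen.refl⟩
              · exact absurd hc hcx
              · refine ⟨w₀, hw₀W, ?_⟩
                rw [Set.mem_singleton_iff.1 hc]
                exact chain_single (Or.inl hw₀) ⟨hvS, fun h => C.hne h.symm⟩ (hWsub hw₀W)
            obtain ⟨a', ha', hca⟩ := fix a ha
            obtain ⟨b', hb', hcb⟩ := fix b hb
            exact (hca.trans (core a' ha' ⟨ha'.1, hWm a' ha'⟩ b' hb' ⟨hb'.1, hWm b' hb'⟩)).trans
              (chain_symm hcb)
          · -- cut x = v
            have hxv' : x = v := Set.mem_singleton_iff.1 hxv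
            subst hxv'
            intro a ha b hb
            have hWsub : W ⊆ S \ {x} := fun w hw => ⟨hWS hw, hw.2.2⟩
            have core := mfree (S' \ {φ u}) (S \ {x})
              (fun h => h.2 rfl)
              (fun y' hy hym => hWsub (hpsiW y' hy.1 hym)) (hB.2 (φ u) hm)
            have fix : ∀ c, c ∈ S \ {x} → ∃ c', c' ∈ W ∧ Chain arc (S \ {x}) c c' := by
              rintro c ⟨(hc | hc | hc), hcx⟩
              · exact ⟨c, hc, Relation.ReflTransGen.refl⟩
              · refine ⟨w₁, hw₁W, ?_⟩
                rw [hc]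
                exact chain_single hw₁.symm ⟨huS, C.hne⟩ (hWsub hw₁W)
              · exact absurd (Set.mem_singleton_iff.1 hc) hcx
            obtain ⟨a', ha', hca⟩ := fix a ha
            obtain ⟨b', hb', hcb⟩ := fix b hb
            exact (hca.trans (core a' ha' ⟨ha'.1, hWm a' ha'⟩ b' hb' ⟨hb'.1, hWm b' hb'⟩)).trans
              (chain_symm hcb)
      · -- ¬hv_nb : S = W ∪ {u}
        have fromu : ∀ y' ∈ S', y' ≠ φ u → arc' (φ u) y' → arc u (ψ y') := by
          intro y' hy hym e
          rcases C.real_from e hym with h | h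
          · exact h
          · exact absurd ⟨ψ y', hpsiW y' hy hym, h⟩ hv_nb
        set S : Set V := W ∪ {u} with hSdef
        have hWS : W ⊆ S := Set.subset_union_left
        have huS : u ∈ S := Or.inr rfl
        refine ⟨S, ⟨?_, ?_⟩, fun w h h1 h2 => hWS ⟨h, h1, h2⟩⟩
        · refine C.conn_up u hB.1 (fun y' hy hym => hWS (hpsiW y' hy hym)) ?_ ?_ ?_ ?_
          · intro x' hx hxm e _
            exact chain_single (Or.inl (C.real_to e hxm)) (hWS (hpsiW x' hx hxm)) huS
          · intro y' hy hym e _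
            exact chain_single (Or.inl (fromu y' hy hym e)) huS (hWS (hpsiW y' hy hym))
          · rintro a (ha | ha)
            · exact ha.1
            · rw [Set.mem_singleton_iff.1 ha]; exact hm
          · rintro a (ha | ha) hphi
            · exact absurd hphi (hWm a ha)
            · rw [Set.mem_singleton_iff.1 ha]; exact Relation.ReflTransGen.refl
        · intro x hxS
          rcases hxS with hxW | hxu
          · refine C.conn_up u (hB.2 (φ x) hxW.1) ?_ ?_ ?_ ?_ ?_
            · intro y' hy hym
              exact ⟨hWS (hpsiW y' hy.1 hym), hWx x hxW y' hy.2⟩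
            · intro x' hx hxm e _
              exact chain_single (Or.inl (C.real_to e hxm))
                ⟨hWS (hpsiW x' hx.1 hxm), hWx x hxW x' hx.2⟩ ⟨huS, fun h => hxW.2.1 h.symm⟩
            · intro y' hy hym e _
              exact chain_single (Or.inl (fromu y' hy.1 hym e)) ⟨huS, fun h => hxW.2.1 h.symm⟩
                ⟨hWS (hpsiW y' hy.1 hym), hWx x hxW y' hy.2⟩
            · rintro a ⟨(ha | ha), hax⟩
              · exact ⟨ha.1, hprojW x hxW a ha hax⟩
              · rw [Set.mem_singleton_iff.1 ha]; exact ⟨hm, fun h => hWm x hxW h.symm⟩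
            · rintro a ⟨(ha | ha), hax⟩ hphi
              · exact absurd hphi (hWm a ha)
              · rw [Set.mem_singleton_iff.1 ha]; exact Relation.ReflTransGen.refl
          · -- cut x = u
            have hxu' : x = u := Set.mem_singleton_iff.1 hxu
            subst hxu'
            intro a ha b hb
            have hWsub : W ⊆ S \ {x} := fun w hw => ⟨hWS hw, hw.2.1⟩
            have haW : a ∈ W := by
              rcases ha with ⟨(h | h), hax⟩
              · exact h
              · exact absurd (Set.mem_singleton_iff.1 h) hax
            have hbW : b ∈ W := by
              rcases hb with ⟨(h | h), hbx⟩
              · exact h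
              · exact absurd (Set.mem_singleton_iff.1 h) hbx
            exact mfree (S' \ {φ x}) (S \ {x}) (fun h => h.2 rfl)
              (fun y' hy hym => hWsub (hpsiW y' hy.1 hym)) (hB.2 (φ x) hm)
              a haW ⟨haW.1, hWm a haW⟩ b hbW ⟨hbW.1, hWm b hbW⟩
    · -- ¬hu_nb : S = W ∪ {v}
      have noin : ∀ x' ∈ S', x' ≠ φ u → ¬ arc' x' (φ u) := by
        intro x' hx hxm e
        exact hu_nb ⟨ψ x', hpsiW x' hx hxm, Or.inl (C.real_to e hxm)⟩
      have fromv : ∀ y' ∈ S', y' ≠ φ u → arc' (φ u) y' → arc v (ψ y') := by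
        intro y' hy hym e
        rcases C.real_from e hym with h | h
        · exact absurd ⟨ψ y', hpsiW y' hy hym, Or.inr h⟩ hu_nb
        · exact h
      set S : Set V := W ∪ {v} with hSdef
      have hWS : W ⊆ S := Set.subset_union_left
      have hvS : v ∈ S := Or.inr rfl
      refine ⟨S, ⟨?_, ?_⟩, fun w h h1 h2 => hWS ⟨h, h1, h2⟩⟩
      · refine C.conn_up v hB.1 (fun y' hy hym => hWS (hpsiW y' hy hym)) ?_ ?_ ?_ ?_
        · intro x' hx hxm e _
          exact absurd e (noin x' hx hxm)
        · intro y' hy hym e _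
          exact chain_single (Or.inl (fromv y' hy hym e)) hvS (hWS (hpsiW y' hy hym))
        · rintro a (ha | ha)
          · exact ha.1
          · rw [Set.mem_singleton_iff.1 ha, ← C.hcol]; exact hm
        · rintro a (ha | ha) hphi
          · exact absurd hphi (hWm a ha)
          · rw [Set.mem_singleton_iff.1 ha]; exact Relation.ReflTransGen.refl
      · intro x hxS
        rcases hxS with hxW | hxv
        · refine C.conn_up v (hB.2 (φ x) hxW.1) ?_ ?_ ?_ ?_ ?_
          · intro y' hy hym
            exact ⟨hWS (hpsiW y' hy.1 hym), hWx x hxW y' hy.2⟩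
          · intro x' hx hxm e _
            exact absurd e (noin x' hx.1 hxm)
          · intro y' hy hym e _
            exact chain_single (Or.inl (fromv y' hy.1 hym e)) ⟨hvS, fun h => hxW.2.2 h.symm⟩
              ⟨hWS (hpsiW y' hy.1 hym), hWx x hxW y' hy.2⟩
          · rintro a ⟨(ha | ha), hax⟩
            · exact ⟨ha.1, hprojW x hxW a ha hax⟩
            · rw [Set.mem_singleton_iff.1 ha, ← C.hcol]
              exact ⟨hm, fun h => hWm x hxW h.symm⟩
          · rintro a ⟨(ha | ha), hax⟩ hphi
            · exact absurd hphi (hWm a ha)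
            · rw [Set.mem_singleton_iff.1 ha]; exact Relation.ReflTransGen.refl
        · -- cut x = v
          have hxv' : x = v := Set.mem_singleton_iff.1 hxv
          subst hxv'
          intro a ha b hb
          have hWsub : W ⊆ S \ {x} := fun w hw => ⟨hWS hw, hw.2.2⟩
          have haW : a ∈ W := by
            rcases ha with ⟨(h | h), hax⟩
            · exact h
            · exact absurd (Set.mem_singleton_iff.1 h) hax
          have hbW : b ∈ W := by
            rcases hb with ⟨(h | h), hbx⟩
            · exact h
            · exact absurd (Set.mem_singleton_iff.1 h) hbx
          exact mfree (S' \ {φ u}) (S \ {x}) (fun h => h.2 rfl)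
            (fun y' hy hym => hWsub (hpsiW y' hy.1 hym)) (hB.2 (φ u) hm)
            a haW ⟨haW.1, hWm a haW⟩ b hbW ⟨hbW.1, hWm b hbW⟩
  · -- φ u ∉ S' : S = W
    refine ⟨W, ⟨?_, ?_⟩, fun w h h1 h2 => ⟨h, h1, h2⟩⟩
    · intro a ha b hb
      exact mfree S' W hm (fun y' hy hym => hpsiW y' hy hym) hB.1 a ha ha.1 b hb hb.1
    · intro x hxW a ha b hb
      have core := mfree (S' \ {φ x}) (W \ {x}) (fun h => hm h.1)
        (fun y' hy hym => ⟨hpsiW y' hy.1 hym, hWx x hxW y' hy.2⟩) (hB.2 (φ x) hxW.1)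
      exact core a ha.1 ⟨ha.1.1, hprojW x hxW a ha.1 ha.2⟩ b hb.1 ⟨hb.1.1, hprojW x hxW b hb.1 hb.2⟩

theorem Ctr.level1blocks (hlb : Level1Blocks arc) : Level1Blocks arc' := by
  intro S' hblk r₁' r₂' h1 h2 hr1 hr2
  obtain ⟨hm1, hR1⟩ := C.retic_down hr1
  obtain ⟨hm2, hR2⟩ := C.retic_down hr2
  obtain ⟨S, hS, hsub⟩ := C.biconn_up hblk.1
  obtain ⟨B, hBlk, hSB⟩ := biconn_block hS
  have m1 : ψ r₁' ∈ S := hsub _ (by rw [C.hpsi]; exact h1) (C.psi_ne hm1).1 (C.psi_ne hm1).2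
  have m2 : ψ r₂' ∈ S := hsub _ (by rw [C.hpsi]; exact h2) (C.psi_ne hm2).1 (C.psi_ne hm2).2
  have := hlb B hBlk (ψ r₁') (ψ r₂') (hSB m1) (hSB m2) hR1 hR2
  calc r₁' = φ (ψ r₁') := (C.hpsi _).symm
    _ = φ (ψ r₂') := congrArg φ this
    _ = r₂' := C.hpsi _

end CtrBlocks

section CtrLift
variable {V V' : Type} {arc : V → V → Prop} {arc' : V' → V' → Prop} {φ : V → V'} {ψ : V' → V}
  {u v : V}

theorem isWalk_nil {a b : V} (h : IsWalk arc a [] b) : a = b := h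

variable (C : Ctr arc arc' φ ψ u v)
include C

theorem Ctr.crit_left {L' : List V'} (P : V → Prop) :
    ∀ w ∈ (L'.map ψ).dropLast, φ w ∈ L'.dropLast ∨ P w := by
  intro w hw
  rw [← List.map_dropLast] at hw
  exact Or.inl (C.mem_map_phi hw)

theorem Ctr.phi_cons {a' : V'} {L' : List V'} {a₀ : V} (ha : φ a₀ = a') :
    ∀ w ∈ a₀ :: L'.map ψ, φ w ∈ a' :: L' := by
  intro w hw
  rcases List.mem_cons.1 hw with rfl | hw
  · exact List.mem_cons.2 (Or.inl ha)
  · exact List.mem_cons.2 (Or.inr (C.mem_map_phi hw))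

theorem Ctr.uv_notin {L : List V'} (hL : ∀ w ∈ L, w ≠ φ u) :
    u ∉ L.map ψ ∧ v ∉ L.map ψ :=
  ⟨fun h => (C.noUV h hL).1 rfl, fun h => (C.noUV h hL).2 rfl⟩

theorem Ctr.intdisj_free {a' b' : V'} {L' M' : List V'} {a₀ b₀ : V}
    (hd : IntDisj a' L' b' M') (ha : φ a₀ = a') (hb : φ b₀ = b') :
    IntDisj a₀ (L'.map ψ) b₀ (M'.map ψ) := by
  refine intdisj_crit (φ := φ) hd (C.crit_left _) (C.crit_left _) (C.phi_cons ha) (C.phi_cons hb)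

theorem Ctr.lift_mid {a' b' : V'} {L : List V'}
    (hacyc' : ∀ w', ¬ Relation.TransGen arc' w' w')
    (hW : IsWalk arc' a' L b') (ha : a' ≠ φ u) (hb : b' ≠ φ u) (hm : φ u ∈ L) :
    ∃ M : List V, IsWalk arc (ψ a') M (ψ b') ∧
      (∀ w ∈ M, φ w ∈ L) ∧ (∀ w ∈ M.dropLast, φ w ∈ L.dropLast) := by
  obtain ⟨L₁, L₂, rfl, hw1, hw2, hnm⟩ := walk_decomp hW hm
  have hL₂ne : L₂ ≠ [] := by
    rintro rfl
    exact hb (isWalk_nil hw2).symm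
  have hnm₂ : φ u ∉ L₂ := by
    intro hmem
    obtain ⟨P₁, P₂, -, hwp, -, -⟩ := walk_decomp hw2 hmem
    exact hacyc' (φ u) (walk_transGen hwp (by simp))
  have hmf₁ : ∀ w ∈ L₁, w ≠ φ u := fun w hw h => hnm (h ▸ hw)
  have hmf₂ : ∀ w ∈ L₂, w ≠ φ u := fun w hw h => hnm₂ (h ▸ hw)
  have H1 : IsWalk arc (ψ a') (L₁.map ψ ++ [u]) u := C.lift_toM hw1 ha hmf₁
  obtain ⟨q, L₂', rfl⟩ := List.exists_cons_of_ne_nil hL₂ne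
  obtain ⟨hs, H2⟩ := C.lift_fromM hw2 hmf₂
  have hdL : (L₁ ++ φ u :: q :: L₂').dropLast = L₁ ++ φ u :: (q :: L₂').dropLast := by
    rw [List.dropLast_append_of_ne_nil (by simp)]
    rw [List.dropLast_cons_of_ne_nil (by simp)]
  have hmemL : ∀ w : V, (φ w ∈ L₁ ∨ φ w = φ u ∨ φ w ∈ (q :: L₂').dropLast) →
      φ w ∈ (L₁ ++ φ u :: q :: L₂').dropLast := by
    intro w hw
    rw [hdL, List.mem_append, List.mem_cons]
    tauto
  rcases hs with hs | hs
  · refine ⟨L₁.map ψ ++ [u] ++ (q :: L₂').map ψ,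
      walk_append H1 ⟨hs, H2⟩, ?_, ?_⟩
    · intro w hw
      simp only [List.mem_append, List.mem_cons, List.mem_singleton, List.mem_nil_iff, or_false] at hw
      rcases hw with (hw | rfl) | hw
      · exact List.mem_append.2 (Or.inl (C.mem_map_phi hw))
      · simp
      · exact List.mem_append.2 (Or.inr (List.mem_cons.2 (Or.inr (C.mem_map_phi hw))))
    · intro w hw
      rw [List.dropLast_append_of_ne_nil (by simp)] at hw
      simp only [List.mem_append, List.mem_cons, List.mem_singleton, List.mem_nil_iff, or_false] at hw
      rcases hw with (hw | rfl) | hw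
      · exact hmemL w (Or.inl (C.mem_map_phi hw))
      · exact hmemL w (Or.inr (Or.inl rfl))
      · rw [← List.map_dropLast] at hw
        exact hmemL w (Or.inr (Or.inr (C.mem_map_phi hw)))
  · refine ⟨L₁.map ψ ++ [u] ++ (v :: (q :: L₂').map ψ),
      walk_append H1 ⟨C.huv, hs, H2⟩, ?_, ?_⟩
    · intro w hw
      simp only [List.mem_append, List.mem_cons, List.mem_singleton, List.mem_nil_iff, or_false] at hw
      rcases hw with (hw | rfl) | (rfl | hw)
      · exact List.mem_append.2 (Or.inl (C.mem_map_phi hw))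
      · simp
      · rw [← C.hcol]; simp
      · exact List.mem_append.2 (Or.inr (List.mem_cons.2 (Or.inr (C.mem_map_phi hw))))
    · intro w hw
      rw [List.dropLast_append_of_ne_nil (by simp),
        List.dropLast_cons_of_ne_nil (by simp)] at hw
      simp only [List.mem_append, List.mem_cons, List.mem_singleton, List.mem_nil_iff, or_false] at hw
      rcases hw with (hw | rfl) | (rfl | hw)
      · exact hmemL w (Or.inl (C.mem_map_phi hw))
      · exact hmemL w (Or.inr (Or.inl rfl))
      · exact hmemL w (Or.inr (Or.inl (C.hcol.symm)))
      · rw [← List.map_dropLast] at hw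
        exact hmemL w (Or.inr (Or.inr (C.mem_map_phi hw)))

end CtrLift

section CtrConsistent
variable {V V' : Type} {arc : V → V → Prop} {arc' : V' → V' → Prop} {φ : V → V'} {ψ : V' → V}
  {u v : V}
variable (C : Ctr arc arc' φ ψ u v)
include C

theorem Ctr.consistent_down (hacyc' : ∀ w', ¬ Relation.TransGen arc' w' w')
    {x y z : V} (hxm : φ x ≠ φ u) (hym : φ y ≠ φ u) (hzm : φ z ≠ φ u)
    (h : Consistent arc' (φ x) (φ y) (φ z)) : Consistent arc x y z := by
  obtain ⟨u', v', l₁, l₂, l₃, l₄, hne, w₁, w₂, w₃, w₄, d₁₂, d₁₃, d₁₄, d₂₃, d₂₄, d₃₄⟩ := h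
  have ex : ψ (φ x) = x := (C.uniq rfl hxm).symm
  have ey : ψ (φ y) = y := (C.uniq rfl hym).symm
  have ez : ψ (φ z) = z := (C.uniq rfl hzm).symm
  have hsplit : ∀ {a' b' : V'} {L : List V'}, IsWalk arc' a' L b' →
      ∀ w ∈ L, w ∈ L.dropLast ∨ w = b' := by
    intro a' b' L hw w hwL
    by_cases hL : L = []
    · subst hL; simp at hwL
    · rw [walk_end hw hL] at hwL
      rcases List.mem_append.1 hwL with h | h
      · exact Or.inl h
      · exact Or.inr (List.mem_singleton.1 h)
  by_cases hu₀ : u' = φ u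
  · -- CASE C : the shared top is the merged vertex
    subst hu₀
    have hv'm : v' ≠ φ u := fun h => hne h.symm
    have hl₁ne : l₁ ≠ [] := fun h => hxm (isWalk_nil (h ▸ w₁)).symm
    have hl₂ne : l₂ ≠ [] := fun h => hym (isWalk_nil (h ▸ w₂)).symm
    have hl₃ne : l₃ ≠ [] := fun h => hv'm (isWalk_nil (h ▸ w₃))
    have f₁ : ∀ w ∈ l₁, w ≠ φ u := by
      intro w hw heq
      rcases hsplit w₁ w hw with hin | hlast
      · exact d₁₂.1 w hin (heq ▸ List.mem_cons_self)
      · exact hxm (hlast.symm.trans heq)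
    have f₂ : ∀ w ∈ l₂, w ≠ φ u := by
      intro w hw heq
      rcases hsplit w₂ w hw with hin | hlast
      · exact d₁₂.2 w hin (heq ▸ List.mem_cons_self)
      · exact hym (hlast.symm.trans heq)
    have f₄ : ∀ w ∈ l₄, w ≠ φ u := by
      intro w hw heq
      rcases hsplit w₄ w hw with hin | hlast
      · exact d₁₄.2 w hin (heq ▸ List.mem_cons_self)
      · exact hzm (hlast.symm.trans heq)
    have f₃d : ∀ w ∈ l₃.dropLast, w ≠ φ u :=
      fun w hw heq => d₂₃.2 w hw (heq ▸ List.mem_cons_self)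
    have hl₃eq : l₃ = l₃.dropLast ++ [φ u] := walk_end w₃ hl₃ne
    have W₃ : IsWalk arc (ψ v') (l₃.dropLast.map ψ ++ [u]) u :=
      C.lift_toM (hl₃eq ▸ w₃) hv'm f₃d
    obtain ⟨q₁, l₁', rfl⟩ := List.exists_cons_of_ne_nil hl₁ne
    obtain ⟨q₂, l₂', rfl⟩ := List.exists_cons_of_ne_nil hl₂ne
    obtain ⟨hs₁, W₁⟩ := C.lift_fromM w₁ f₁
    obtain ⟨hs₂, W₂⟩ := C.lift_fromM w₂ f₂
    have W₄ := C.lift_free w₄ hv'm f₄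
    rw [ex] at W₁
    rw [ey] at W₂
    rw [ez] at W₄
    have hmem3 : φ u ∈ l₃ := by rw [hl₃eq]; simp
    have h₃left : ∀ (P : V → Prop), ∀ w ∈ (l₃.dropLast.map ψ ++ [u]).dropLast,
        φ w ∈ l₃.dropLast ∨ P w := by
      intro P w hw
      rw [List.dropLast_concat] at hw
      exact Or.inl (C.mem_map_phi hw)
    have hφM₃ : ∀ w ∈ ψ v' :: (l₃.dropLast.map ψ ++ [u]), φ w ∈ v' :: l₃ := by
      intro w hw
      rcases List.mem_cons.1 hw with rfl | hw
      · exact List.mem_cons.2 (Or.inl (C.hpsi v'))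
      · rcases List.mem_append.1 hw with hw | hw
        · exact List.mem_cons.2 (Or.inr (List.dropLast_subset _ (C.mem_map_phi hw)))
        · rw [List.mem_singleton.1 hw]
          exact List.mem_cons.2 (Or.inr hmem3)
    rcases hs₁ with hs₁ | hs₁ <;> rcases hs₂ with hs₂ | hs₂
    · -- uu
      refine ⟨u, ψ v', (q₁ :: l₁').map ψ, (q₂ :: l₂').map ψ, l₃.dropLast.map ψ ++ [u],
        l₄.map ψ, fun h => (C.psi_ne hv'm).1 h.symm, ⟨hs₁, W₁⟩, ⟨hs₂, W₂⟩, W₃, W₄,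
        C.intdisj_free d₁₂ rfl rfl,
        intdisj_crit (φ := φ) d₁₃ (C.crit_left _) (h₃left _) (C.phi_cons rfl) hφM₃,
        C.intdisj_free d₁₄ rfl (C.hpsi v'),
        intdisj_crit (φ := φ) d₂₃ (C.crit_left _) (h₃left _) (C.phi_cons rfl) hφM₃,
        C.intdisj_free d₂₄ rfl (C.hpsi v'),
        intdisj_crit (φ := φ) d₃₄ (h₃left _) (C.crit_left _) hφM₃ (C.phi_cons (C.hpsi v'))⟩
    · -- uv
      have hφM₂ : ∀ w ∈ u :: (v :: (q₂ :: l₂').map ψ), φ w ∈ φ u :: q₂ :: l₂' := by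
        intro w hw
        rcases List.mem_cons.1 hw with rfl | hw
        · exact List.mem_cons.2 (Or.inl rfl)
        · rcases List.mem_cons.1 hw with rfl | hw
          · exact List.mem_cons.2 (Or.inl C.hcol.symm)
          · exact List.mem_cons.2 (Or.inr (C.mem_map_phi hw))
      have h₂left : ∀ (b₀ : V) (M₀ : List V), v ∉ b₀ :: M₀ →
          ∀ w ∈ (v :: (q₂ :: l₂').map ψ).dropLast, φ w ∈ (q₂ :: l₂').dropLast ∨ w ∉ b₀ :: M₀ := by
        intro b₀ M₀ hv w hw
        rw [List.dropLast_cons_of_ne_nil (by simp)] at hw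
        rcases List.mem_cons.1 hw with rfl | hw
        · exact Or.inr hv
        · rw [← List.map_dropLast] at hw
          exact Or.inl (C.mem_map_phi hw)
      have nv₁ : v ∉ u :: ((q₁ :: l₁').map ψ) := by
        intro hv
        rcases List.mem_cons.1 hv with h | h
        · exact C.hne h.symm
        · exact (C.uv_notin f₁).2 h
      have nv₃ : v ∉ ψ v' :: (l₃.dropLast.map ψ ++ [u]) := by
        intro hv
        rcases List.mem_cons.1 hv with h | h
        · exact (C.psi_ne hv'm).2 h.symm
        · rcases List.mem_append.1 h with h | h
          · exact (C.uv_notin f₃d).2 h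
          · exact C.hne (List.mem_singleton.1 h).symm
      have nv₄ : v ∉ ψ v' :: l₄.map ψ := by
        intro hv
        rcases List.mem_cons.1 hv with h | h
        · exact (C.psi_ne hv'm).2 h.symm
        · exact (C.uv_notin f₄).2 h
      refine ⟨u, ψ v', (q₁ :: l₁').map ψ, v :: (q₂ :: l₂').map ψ, l₃.dropLast.map ψ ++ [u],
        l₄.map ψ, fun h => (C.psi_ne hv'm).1 h.symm, ⟨hs₁, W₁⟩, ⟨C.huv, hs₂, W₂⟩, W₃, W₄,
        intdisj_crit (φ := φ) d₁₂ (C.crit_left _) (h₂left _ _ nv₁) (C.phi_cons rfl) hφM₂,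
        intdisj_crit (φ := φ) d₁₃ (C.crit_left _) (h₃left _) (C.phi_cons rfl) hφM₃,
        C.intdisj_free d₁₄ rfl (C.hpsi v'),
        intdisj_crit (φ := φ) d₂₃ (h₂left _ _ nv₃) (h₃left _) hφM₂ hφM₃,
        intdisj_crit (φ := φ) d₂₄ (h₂left _ _ nv₄) (C.crit_left _) hφM₂ (C.phi_cons (C.hpsi v')),
        intdisj_crit (φ := φ) d₃₄ (h₃left _) (C.crit_left _) hφM₃ (C.phi_cons (C.hpsi v'))⟩
    · -- vu
      have hφM₁ : ∀ w ∈ u :: (v :: (q₁ :: l₁').map ψ), φ w ∈ φ u :: q₁ :: l₁' := by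
        intro w hw
        rcases List.mem_cons.1 hw with rfl | hw
        · exact List.mem_cons.2 (Or.inl rfl)
        · rcases List.mem_cons.1 hw with rfl | hw
          · exact List.mem_cons.2 (Or.inl C.hcol.symm)
          · exact List.mem_cons.2 (Or.inr (C.mem_map_phi hw))
      have h₁left : ∀ (b₀ : V) (M₀ : List V), v ∉ b₀ :: M₀ →
          ∀ w ∈ (v :: (q₁ :: l₁').map ψ).dropLast, φ w ∈ (q₁ :: l₁').dropLast ∨ w ∉ b₀ :: M₀ := by
        intro b₀ M₀ hv w hw
        rw [List.dropLast_cons_of_ne_nil (by simp)] at hw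
        rcases List.mem_cons.1 hw with rfl | hw
        · exact Or.inr hv
        · rw [← List.map_dropLast] at hw
          exact Or.inl (C.mem_map_phi hw)
      have nv₂ : v ∉ u :: ((q₂ :: l₂').map ψ) := by
        intro hv
        rcases List.mem_cons.1 hv with h | h
        · exact C.hne h.symm
        · exact (C.uv_notin f₂).2 h
      have nv₃ : v ∉ ψ v' :: (l₃.dropLast.map ψ ++ [u]) := by
        intro hv
        rcases List.mem_cons.1 hv with h | h
        · exact (C.psi_ne hv'm).2 h.symm
        · rcases List.mem_append.1 h with h | h
          · exact (C.uv_notin f₃d).2 h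
          · exact C.hne (List.mem_singleton.1 h).symm
      have nv₄ : v ∉ ψ v' :: l₄.map ψ := by
        intro hv
        rcases List.mem_cons.1 hv with h | h
        · exact (C.psi_ne hv'm).2 h.symm
        · exact (C.uv_notin f₄).2 h
      refine ⟨u, ψ v', v :: (q₁ :: l₁').map ψ, (q₂ :: l₂').map ψ, l₃.dropLast.map ψ ++ [u],
        l₄.map ψ, fun h => (C.psi_ne hv'm).1 h.symm, ⟨C.huv, hs₁, W₁⟩, ⟨hs₂, W₂⟩, W₃, W₄,
        intdisj_crit (φ := φ) d₁₂ (h₁left _ _ nv₂) (C.crit_left _) hφM₁ (C.phi_cons rfl),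
        intdisj_crit (φ := φ) d₁₃ (h₁left _ _ nv₃) (h₃left _) hφM₁ hφM₃,
        intdisj_crit (φ := φ) d₁₄ (h₁left _ _ nv₄) (C.crit_left _) hφM₁ (C.phi_cons (C.hpsi v')),
        intdisj_crit (φ := φ) d₂₃ (C.crit_left _) (h₃left _) (C.phi_cons rfl) hφM₃,
        C.intdisj_free d₂₄ rfl (C.hpsi v'),
        intdisj_crit (φ := φ) d₃₄ (h₃left _) (C.crit_left _) hφM₃ (C.phi_cons (C.hpsi v'))⟩
    · -- vv
      have W₃' : IsWalk arc (ψ v') ((l₃.dropLast.map ψ ++ [u]) ++ [v]) v :=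
        walk_append W₃ ⟨C.huv, rfl⟩
      have h₃left' : ∀ (b₀ : V) (M₀ : List V), u ∉ b₀ :: M₀ →
          ∀ w ∈ ((l₃.dropLast.map ψ ++ [u]) ++ [v]).dropLast,
            φ w ∈ l₃.dropLast ∨ w ∉ b₀ :: M₀ := by
        intro b₀ M₀ hu w hw
        rw [List.dropLast_concat] at hw
        rcases List.mem_append.1 hw with hw | hw
        · exact Or.inl (C.mem_map_phi hw)
        · rw [List.mem_singleton.1 hw]
          exact Or.inr hu
      have hφM₃' : ∀ w ∈ ψ v' :: ((l₃.dropLast.map ψ ++ [u]) ++ [v]), φ w ∈ v' :: l₃ := by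
        intro w hw
        rcases List.mem_cons.1 hw with rfl | hw
        · exact List.mem_cons.2 (Or.inl (C.hpsi v'))
        · rcases List.mem_append.1 hw with hw | hw
          · exact hφM₃ w (List.mem_cons.2 (Or.inr hw))
          · rw [List.mem_singleton.1 hw]
            exact List.mem_cons.2 (Or.inr (C.hcol.symm ▸ hmem3))
      have nu₁ : u ∉ v :: ((q₁ :: l₁').map ψ) := by
        intro hu
        rcases List.mem_cons.1 hu with h | h
        · exact C.hne h
        · exact (C.uv_notin f₁).1 h
      have nu₂ : u ∉ v :: ((q₂ :: l₂').map ψ) := by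
        intro hu
        rcases List.mem_cons.1 hu with h | h
        · exact C.hne h
        · exact (C.uv_notin f₂).1 h
      have nu₄ : u ∉ ψ v' :: l₄.map ψ := by
        intro hu
        rcases List.mem_cons.1 hu with h | h
        · exact (C.psi_ne hv'm).1 h.symm
        · exact (C.uv_notin f₄).1 h
      refine ⟨v, ψ v', (q₁ :: l₁').map ψ, (q₂ :: l₂').map ψ,
        (l₃.dropLast.map ψ ++ [u]) ++ [v], l₄.map ψ,
        fun h => (C.psi_ne hv'm).2 h.symm, ⟨hs₁, W₁⟩, ⟨hs₂, W₂⟩, W₃', W₄,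
        C.intdisj_free d₁₂ C.hcol.symm C.hcol.symm,
        intdisj_crit (φ := φ) d₁₃ (C.crit_left _) (h₃left' _ _ nu₁) (C.phi_cons C.hcol.symm) hφM₃',
        C.intdisj_free d₁₄ C.hcol.symm (C.hpsi v'),
        intdisj_crit (φ := φ) d₂₃ (C.crit_left _) (h₃left' _ _ nu₂) (C.phi_cons C.hcol.symm) hφM₃',
        C.intdisj_free d₂₄ C.hcol.symm (C.hpsi v'),
        intdisj_crit (φ := φ) d₃₄ (h₃left' _ _ nu₄) (C.crit_left _) hφM₃' (C.phi_cons (C.hpsi v'))⟩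
  · by_cases hv₀ : v' = φ u
    · -- CASE D
      subst hv₀
      have hl₃ne : l₃ ≠ [] := fun h => hu₀ (isWalk_nil (h ▸ w₃)).symm
      have hl₄ne : l₄ ≠ [] := fun h => hzm (isWalk_nil (h ▸ w₄)).symm
      have f₁ : ∀ w ∈ l₁, w ≠ φ u := by
        intro w hw heq
        rcases hsplit w₁ w hw with hin | hlast
        · exact d₁₃.1 w hin (heq ▸ List.mem_cons_self)
        · exact hxm (hlast.symm.trans heq)
      have f₂ : ∀ w ∈ l₂, w ≠ φ u := by
        intro w hw heq
        rcases hsplit w₂ w hw with hin | hlast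
        · exact d₂₃.1 w hin (heq ▸ List.mem_cons_self)
        · exact hym (hlast.symm.trans heq)
      have f₃ : ∀ w ∈ l₃, w ≠ φ u := by
        intro w hw heq
        rcases hsplit w₃ w hw with hin | hlast
        · exact d₃₄.1 w hin (heq ▸ List.mem_cons_self)
        · exact hu₀ (hlast.symm.trans heq)
      have f₄ : ∀ w ∈ l₄, w ≠ φ u := by
        intro w hw heq
        rcases hsplit w₄ w hw with hin | hlast
        · exact d₃₄.2 w hin (heq ▸ List.mem_cons_self)
        · exact hzm (hlast.symm.trans heq)
      have W₁ := C.lift_free w₁ hu₀ f₁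
      have W₂ := C.lift_free w₂ hu₀ f₂
      obtain ⟨q₃, l₃', rfl⟩ := List.exists_cons_of_ne_nil hl₃ne
      obtain ⟨q₄, l₄', rfl⟩ := List.exists_cons_of_ne_nil hl₄ne
      obtain ⟨hs₃, W₃⟩ := C.lift_fromM w₃ f₃
      obtain ⟨hs₄, W₄⟩ := C.lift_fromM w₄ f₄
      rw [ex] at W₁
      rw [ey] at W₂
      rw [ez] at W₄
      have hne' : ψ u' ≠ u ∧ ψ u' ≠ v := C.psi_ne hu₀
      rcases hs₃ with hs₃ | hs₃ <;> rcases hs₄ with hs₄ | hs₄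
      · -- uu
        exact ⟨ψ u', u, l₁.map ψ, l₂.map ψ, (q₃ :: l₃').map ψ, (q₄ :: l₄').map ψ,
          hne'.1, W₁, W₂, ⟨hs₃, W₃⟩, ⟨hs₄, W₄⟩,
          C.intdisj_free d₁₂ (C.hpsi u') (C.hpsi u'),
          C.intdisj_free d₁₃ (C.hpsi u') rfl,
          C.intdisj_free d₁₄ (C.hpsi u') rfl,
          C.intdisj_free d₂₃ (C.hpsi u') rfl,
          C.intdisj_free d₂₄ (C.hpsi u') rfl,
          C.intdisj_free d₃₄ rfl rfl⟩
      · -- uv : insert v before l₄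
        have hφM₄ : ∀ w ∈ u :: (v :: (q₄ :: l₄').map ψ), φ w ∈ φ u :: q₄ :: l₄' := by
          intro w hw
          rcases List.mem_cons.1 hw with rfl | hw
          · exact List.mem_cons.2 (Or.inl rfl)
          · rcases List.mem_cons.1 hw with rfl | hw
            · exact List.mem_cons.2 (Or.inl C.hcol.symm)
            · exact List.mem_cons.2 (Or.inr (C.mem_map_phi hw))
        have h₄left : ∀ (b₀ : V) (M₀ : List V), v ∉ b₀ :: M₀ →
            ∀ w ∈ (v :: (q₄ :: l₄').map ψ).dropLast,
              φ w ∈ (q₄ :: l₄').dropLast ∨ w ∉ b₀ :: M₀ := by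
          intro b₀ M₀ hv w hw
          rw [List.dropLast_cons_of_ne_nil (by simp)] at hw
          rcases List.mem_cons.1 hw with rfl | hw
          · exact Or.inr hv
          · rw [← List.map_dropLast] at hw
            exact Or.inl (C.mem_map_phi hw)
        have nv₁ : v ∉ ψ u' :: l₁.map ψ := by
          intro hv
          rcases List.mem_cons.1 hv with h | h
          · exact hne'.2 h.symm
          · exact (C.uv_notin f₁).2 h
        have nv₂ : v ∉ ψ u' :: l₂.map ψ := by
          intro hv
          rcases List.mem_cons.1 hv with h | h
          · exact hne'.2 h.symm
          · exact (C.uv_notin f₂).2 h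
        have nv₃ : v ∉ u :: (q₃ :: l₃').map ψ := by
          intro hv
          rcases List.mem_cons.1 hv with h | h
          · exact C.hne h.symm
          · exact (C.uv_notin f₃).2 h
        exact ⟨ψ u', u, l₁.map ψ, l₂.map ψ, (q₃ :: l₃').map ψ, v :: (q₄ :: l₄').map ψ,
          hne'.1, W₁, W₂, ⟨hs₃, W₃⟩, ⟨C.huv, hs₄, W₄⟩,
          C.intdisj_free d₁₂ (C.hpsi u') (C.hpsi u'),
          C.intdisj_free d₁₃ (C.hpsi u') rfl,
          intdisj_crit (φ := φ) d₁₄ (C.crit_left _) (h₄left _ _ nv₁)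
            (C.phi_cons (C.hpsi u')) hφM₄,
          C.intdisj_free d₂₃ (C.hpsi u') rfl,
          intdisj_crit (φ := φ) d₂₄ (C.crit_left _) (h₄left _ _ nv₂)
            (C.phi_cons (C.hpsi u')) hφM₄,
          intdisj_crit (φ := φ) d₃₄ (C.crit_left _) (h₄left _ _ nv₃)
            (C.phi_cons rfl) hφM₄⟩
      · -- vu : insert v before l₃
        have hφM₃ : ∀ w ∈ u :: (v :: (q₃ :: l₃').map ψ), φ w ∈ φ u :: q₃ :: l₃' := by
          intro w hw
          rcases List.mem_cons.1 hw with rfl | hw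
          · exact List.mem_cons.2 (Or.inl rfl)
          · rcases List.mem_cons.1 hw with rfl | hw
            · exact List.mem_cons.2 (Or.inl C.hcol.symm)
            · exact List.mem_cons.2 (Or.inr (C.mem_map_phi hw))
        have h₃left : ∀ (b₀ : V) (M₀ : List V), v ∉ b₀ :: M₀ →
            ∀ w ∈ (v :: (q₃ :: l₃').map ψ).dropLast,
              φ w ∈ (q₃ :: l₃').dropLast ∨ w ∉ b₀ :: M₀ := by
          intro b₀ M₀ hv w hw
          rw [List.dropLast_cons_of_ne_nil (by simp)] at hw
          rcases List.mem_cons.1 hw with rfl | hw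
          · exact Or.inr hv
          · rw [← List.map_dropLast] at hw
            exact Or.inl (C.mem_map_phi hw)
        have nv₁ : v ∉ ψ u' :: l₁.map ψ := by
          intro hv
          rcases List.mem_cons.1 hv with h | h
          · exact hne'.2 h.symm
          · exact (C.uv_notin f₁).2 h
        have nv₂ : v ∉ ψ u' :: l₂.map ψ := by
          intro hv
          rcases List.mem_cons.1 hv with h | h
          · exact hne'.2 h.symm
          · exact (C.uv_notin f₂).2 h
        have nv₄ : v ∉ u :: (q₄ :: l₄').map ψ := by
          intro hv
          rcases List.mem_cons.1 hv with h | h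
          · exact C.hne h.symm
          · exact (C.uv_notin f₄).2 h
        exact ⟨ψ u', u, l₁.map ψ, l₂.map ψ, v :: (q₃ :: l₃').map ψ, (q₄ :: l₄').map ψ,
          hne'.1, W₁, W₂, ⟨C.huv, hs₃, W₃⟩, ⟨hs₄, W₄⟩,
          C.intdisj_free d₁₂ (C.hpsi u') (C.hpsi u'),
          intdisj_crit (φ := φ) d₁₃ (C.crit_left _) (h₃left _ _ nv₁)
            (C.phi_cons (C.hpsi u')) hφM₃,
          C.intdisj_free d₁₄ (C.hpsi u') rfl,
          intdisj_crit (φ := φ) d₂₃ (C.crit_left _) (h₃left _ _ nv₂)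
            (C.phi_cons (C.hpsi u')) hφM₃,
          C.intdisj_free d₂₄ (C.hpsi u') rfl,
          intdisj_crit (φ := φ) d₃₄ (h₃left _ _ nv₄) (C.crit_left _)
            hφM₃ (C.phi_cons rfl)⟩
      · -- vv
        exact ⟨ψ u', v, l₁.map ψ, l₂.map ψ, (q₃ :: l₃').map ψ, (q₄ :: l₄').map ψ,
          hne'.2, W₁, W₂, ⟨hs₃, W₃⟩, ⟨hs₄, W₄⟩,
          C.intdisj_free d₁₂ (C.hpsi u') (C.hpsi u'),
          C.intdisj_free d₁₃ (C.hpsi u') C.hcol.symm,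
          C.intdisj_free d₁₄ (C.hpsi u') C.hcol.symm,
          C.intdisj_free d₂₃ (C.hpsi u') C.hcol.symm,
          C.intdisj_free d₂₄ (C.hpsi u') C.hcol.symm,
          C.intdisj_free d₃₄ C.hcol.symm C.hcol.symm⟩
    · -- u', v' both ≠ m
      have hneψ : ψ u' ≠ ψ v' := fun h => hne (by rw [← C.hpsi u', h, C.hpsi])
      by_cases hm₁ : φ u ∈ l₁
      · -- B1 : m inside l₁
        have hmint₁ : φ u ∈ l₁.dropLast := by
          rcases hsplit w₁ _ hm₁ with h | h
          · exact h
          · exact absurd h.symm hxm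
        have f₂ : ∀ w ∈ l₂, w ≠ φ u :=
          fun w hw heq => d₁₂.1 (φ u) hmint₁ (List.mem_cons.2 (Or.inr (heq ▸ hw)))
        have f₃ : ∀ w ∈ l₃, w ≠ φ u :=
          fun w hw heq => d₁₃.1 (φ u) hmint₁ (List.mem_cons.2 (Or.inr (heq ▸ hw)))
        have f₄ : ∀ w ∈ l₄, w ≠ φ u :=
          fun w hw heq => d₁₄.1 (φ u) hmint₁ (List.mem_cons.2 (Or.inr (heq ▸ hw)))
        obtain ⟨M₁, HW₁, hall₁, hdl₁⟩ := C.lift_mid hacyc' w₁ hu₀ hxm hm₁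
        rw [ex] at HW₁
        have W₂ := C.lift_free w₂ hu₀ f₂
        have W₃ := C.lift_free w₃ hv₀ f₃
        have W₄ := C.lift_free w₄ hv₀ f₄
        rw [ey] at W₂; rw [ez] at W₄
        have hφL₁ : ∀ w ∈ ψ u' :: M₁, φ w ∈ u' :: l₁ := by
          intro w hw
          rcases List.mem_cons.1 hw with rfl | hw
          · exact List.mem_cons.2 (Or.inl (C.hpsi u'))
          · exact List.mem_cons.2 (Or.inr (hall₁ w hw))
        have h1₁ : ∀ (P : V → Prop), ∀ w ∈ M₁.dropLast, φ w ∈ l₁.dropLast ∨ P w :=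
          fun P w hw => Or.inl (hdl₁ w hw)
        exact ⟨ψ u', ψ v', M₁, l₂.map ψ, l₃.map ψ, l₄.map ψ, hneψ, HW₁, W₂, W₃, W₄,
          intdisj_crit (φ := φ) d₁₂ (h1₁ _) (C.crit_left _) hφL₁ (C.phi_cons (C.hpsi u')),
          intdisj_crit (φ := φ) d₁₃ (h1₁ _) (C.crit_left _) hφL₁ (C.phi_cons (C.hpsi v')),
          intdisj_crit (φ := φ) d₁₄ (h1₁ _) (C.crit_left _) hφL₁ (C.phi_cons (C.hpsi v')),
          C.intdisj_free d₂₃ (C.hpsi u') (C.hpsi v'),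
          C.intdisj_free d₂₄ (C.hpsi u') (C.hpsi v'),
          C.intdisj_free d₃₄ (C.hpsi v') (C.hpsi v')⟩
      by_cases hm₂ : φ u ∈ l₂
      · -- B2 : m inside l₂
        have hmint₂ : φ u ∈ l₂.dropLast := by
          rcases hsplit w₂ _ hm₂ with h | h
          · exact h
          · exact absurd h.symm hym
        have f₁ : ∀ w ∈ l₁, w ≠ φ u := fun w hw heq => hm₁ (heq ▸ hw)
        have f₃ : ∀ w ∈ l₃, w ≠ φ u :=
          fun w hw heq => d₂₃.1 (φ u) hmint₂ (List.mem_cons.2 (Or.inr (heq ▸ hw)))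
        have f₄ : ∀ w ∈ l₄, w ≠ φ u :=
          fun w hw heq => d₂₄.1 (φ u) hmint₂ (List.mem_cons.2 (Or.inr (heq ▸ hw)))
        obtain ⟨M₂, HW₂, hall₂, hdl₂⟩ := C.lift_mid hacyc' w₂ hu₀ hym hm₂
        rw [ey] at HW₂
        have W₁ := C.lift_free w₁ hu₀ f₁
        have W₃ := C.lift_free w₃ hv₀ f₃
        have W₄ := C.lift_free w₄ hv₀ f₄
        rw [ex] at W₁; rw [ez] at W₄
        have hφL₂ : ∀ w ∈ ψ u' :: M₂, φ w ∈ u' :: l₂ := by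
          intro w hw
          rcases List.mem_cons.1 hw with rfl | hw
          · exact List.mem_cons.2 (Or.inl (C.hpsi u'))
          · exact List.mem_cons.2 (Or.inr (hall₂ w hw))
        have h1₂ : ∀ (P : V → Prop), ∀ w ∈ M₂.dropLast, φ w ∈ l₂.dropLast ∨ P w :=
          fun P w hw => Or.inl (hdl₂ w hw)
        exact ⟨ψ u', ψ v', l₁.map ψ, M₂, l₃.map ψ, l₄.map ψ, hneψ, W₁, HW₂, W₃, W₄,
          intdisj_crit (φ := φ) d₁₂ (C.crit_left _) (h1₂ _) (C.phi_cons (C.hpsi u')) hφL₂,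
          C.intdisj_free d₁₃ (C.hpsi u') (C.hpsi v'),
          C.intdisj_free d₁₄ (C.hpsi u') (C.hpsi v'),
          intdisj_crit (φ := φ) d₂₃ (h1₂ _) (C.crit_left _) hφL₂ (C.phi_cons (C.hpsi v')),
          intdisj_crit (φ := φ) d₂₄ (h1₂ _) (C.crit_left _) hφL₂ (C.phi_cons (C.hpsi v')),
          C.intdisj_free d₃₄ (C.hpsi v') (C.hpsi v')⟩
      by_cases hm₃ : φ u ∈ l₃
      · -- B3 : m inside l₃
        have f₁ : ∀ w ∈ l₁, w ≠ φ u := fun w hw heq => hm₁ (heq ▸ hw)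
        have f₂ : ∀ w ∈ l₂, w ≠ φ u := fun w hw heq => hm₂ (heq ▸ hw)
        have hmint₃ : φ u ∈ l₃.dropLast := by
          rcases hsplit w₃ _ hm₃ with h | h
          · exact h
          · exact absurd h.symm hu₀
        have f₄ : ∀ w ∈ l₄, w ≠ φ u := by
          intro w hw heq
          rcases hsplit w₄ w hw with hin | hlast
          · exact d₃₄.2 w hin (List.mem_cons.2 (Or.inr (heq ▸ hm₃)))
          · exact hzm (hlast.symm.trans heq)
        obtain ⟨M₃, HW₃, hall₃, hdl₃⟩ := C.lift_mid hacyc' w₃ hv₀ hu₀ hm₃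
        have W₁ := C.lift_free w₁ hu₀ f₁
        have W₂ := C.lift_free w₂ hu₀ f₂
        have W₄ := C.lift_free w₄ hv₀ f₄
        rw [ex] at W₁; rw [ey] at W₂; rw [ez] at W₄
        have hφL₃ : ∀ w ∈ ψ v' :: M₃, φ w ∈ v' :: l₃ := by
          intro w hw
          rcases List.mem_cons.1 hw with rfl | hw
          · exact List.mem_cons.2 (Or.inl (C.hpsi v'))
          · exact List.mem_cons.2 (Or.inr (hall₃ w hw))
        have h1₃ : ∀ (P : V → Prop), ∀ w ∈ M₃.dropLast, φ w ∈ l₃.dropLast ∨ P w :=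
          fun P w hw => Or.inl (hdl₃ w hw)
        exact ⟨ψ u', ψ v', l₁.map ψ, l₂.map ψ, M₃, l₄.map ψ, hneψ, W₁, W₂, HW₃, W₄,
          C.intdisj_free d₁₂ (C.hpsi u') (C.hpsi u'),
          intdisj_crit (φ := φ) d₁₃ (C.crit_left _) (h1₃ _) (C.phi_cons (C.hpsi u')) hφL₃,
          C.intdisj_free d₁₄ (C.hpsi u') (C.hpsi v'),
          intdisj_crit (φ := φ) d₂₃ (C.crit_left _) (h1₃ _) (C.phi_cons (C.hpsi u')) hφL₃,
          C.intdisj_free d₂₄ (C.hpsi u') (C.hpsi v'),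
          intdisj_crit (φ := φ) d₃₄ (h1₃ _) (C.crit_left _) hφL₃ (C.phi_cons (C.hpsi v'))⟩
      by_cases hm₄ : φ u ∈ l₄
      · -- B4 : m inside l₄
        have f₁ : ∀ w ∈ l₁, w ≠ φ u := fun w hw heq => hm₁ (heq ▸ hw)
        have f₂ : ∀ w ∈ l₂, w ≠ φ u := fun w hw heq => hm₂ (heq ▸ hw)
        have f₃ : ∀ w ∈ l₃, w ≠ φ u := fun w hw heq => hm₃ (heq ▸ hw)
        obtain ⟨M₄, HW₄, hall₄, hdl₄⟩ := C.lift_mid hacyc' w₄ hv₀ hzm hm₄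
        rw [ez] at HW₄
        have W₁ := C.lift_free w₁ hu₀ f₁
        have W₂ := C.lift_free w₂ hu₀ f₂
        have W₃ := C.lift_free w₃ hv₀ f₃
        rw [ex] at W₁; rw [ey] at W₂
        have hφL₄ : ∀ w ∈ ψ v' :: M₄, φ w ∈ v' :: l₄ := by
          intro w hw
          rcases List.mem_cons.1 hw with rfl | hw
          · exact List.mem_cons.2 (Or.inl (C.hpsi v'))
          · exact List.mem_cons.2 (Or.inr (hall₄ w hw))
        have h1₄ : ∀ (P : V → Prop), ∀ w ∈ M₄.dropLast, φ w ∈ l₄.dropLast ∨ P w :=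
          fun P w hw => Or.inl (hdl₄ w hw)
        exact ⟨ψ u', ψ v', l₁.map ψ, l₂.map ψ, l₃.map ψ, M₄, hneψ, W₁, W₂, W₃, HW₄,
          C.intdisj_free d₁₂ (C.hpsi u') (C.hpsi u'),
          C.intdisj_free d₁₃ (C.hpsi u') (C.hpsi v'),
          intdisj_crit (φ := φ) d₁₄ (C.crit_left _) (h1₄ _) (C.phi_cons (C.hpsi u')) hφL₄,
          C.intdisj_free d₂₃ (C.hpsi u') (C.hpsi v'),
          intdisj_crit (φ := φ) d₂₄ (C.crit_left _) (h1₄ _) (C.phi_cons (C.hpsi u')) hφL₄,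
          intdisj_crit (φ := φ) d₃₄ (C.crit_left _) (h1₄ _) (C.phi_cons (C.hpsi v')) hφL₄⟩
      · -- CASE A : m nowhere
        have f₁ : ∀ w ∈ l₁, w ≠ φ u := fun w hw heq => hm₁ (heq ▸ hw)
        have f₂ : ∀ w ∈ l₂, w ≠ φ u := fun w hw heq => hm₂ (heq ▸ hw)
        have f₃ : ∀ w ∈ l₃, w ≠ φ u := fun w hw heq => hm₃ (heq ▸ hw)
        have f₄ : ∀ w ∈ l₄, w ≠ φ u := fun w hw heq => hm₄ (heq ▸ hw)
        have W₁ := C.lift_free w₁ hu₀ f₁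
        have W₂ := C.lift_free w₂ hu₀ f₂
        have W₃ := C.lift_free w₃ hv₀ f₃
        have W₄ := C.lift_free w₄ hv₀ f₄
        rw [ex] at W₁; rw [ey] at W₂; rw [ez] at W₄
        exact ⟨ψ u', ψ v', l₁.map ψ, l₂.map ψ, l₃.map ψ, l₄.map ψ,
          fun h => hne (by rw [← C.hpsi u', h, C.hpsi]),
          W₁, W₂, W₃, W₄,
          C.intdisj_free d₁₂ (C.hpsi u') (C.hpsi u'),
          C.intdisj_free d₁₃ (C.hpsi u') (C.hpsi v'),
          C.intdisj_free d₁₄ (C.hpsi u') (C.hpsi v'),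
          C.intdisj_free d₂₃ (C.hpsi u') (C.hpsi v'),
          C.intdisj_free d₂₄ (C.hpsi u') (C.hpsi v'),
          C.intdisj_free d₃₄ (C.hpsi v') (C.hpsi v')⟩

end CtrConsistent


/-- let `N` be a level-1 network and `a = (u,v)` an arc with `v` not a
reticulation, `v` not a leaf and `u` not a reticulation.  Contracting `a` — i.e. taking
the quotient of `N` by the map `φ` that identifies exactly `u` and `v`, the arcs of the
quotient being exactly the `φ`-images of arcs of `N` not collapsed by `φ` — yields a
DAG `N'` that is again a level-1 network (acyclic, rooted at `φ(root)` with every vertex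
reachable, semi-binary and with at most one reticulation per biconnected component),
and every triplet consistent with `N'` is consistent with `N`. -/
theorem stmt_16 {X : Type} (N : PhyloNet X) (hN : N.Level1)
    (u v : N.V) (huv : N.arc u v)
    (hv_not_retic : ¬ IsRetic N.arc v)
    (hu_not_retic : ¬ IsRetic N.arc u)
    (hv_not_leaf : ¬ ∃ x, v = N.leafOf x)
    {V' : Type} (arc' : V' → V' → Prop) (φ : N.V → V')
    (hsurj : Function.Surjective φ)
    (hcol : φ u = φ v)
    (hinj : ∀ a b, φ a = φ b →
      a = b ∨ (a ∈ ({u, v} : Set N.V) ∧ b ∈ ({u, v} : Set N.V)))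
    (harc : ∀ a' b', arc' a' b' ↔
      ∃ a b, φ a = a' ∧ φ b = b' ∧ N.arc a b ∧ φ a ≠ φ b) :
    (∀ w', ¬ Relation.TransGen arc' w' w') ∧
    (∀ w', Relation.ReflTransGen arc' (φ N.root) w') ∧
    SemiBinary arc' ∧
    Level1Blocks arc' ∧
    (∀ a b c : X,
      Consistent arc' (φ (N.leafOf a)) (φ (N.leafOf b)) (φ (N.leafOf c)) →
      Consistent N.arc (N.leafOf a) (N.leafOf b) (N.leafOf c)) := by
  have hne : u ≠ v := fun h => N.acyclic u (Relation.TransGen.single (by rw [h] at huv ⊢; exact huv))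
  have hinj' : ∀ a b, φ a = φ b → a = b ∨ ((a = u ∨ a = v) ∧ (b = u ∨ b = v)) := by
    intro a b h
    rcases hinj a b h with h' | ⟨ha, hb⟩
    · exact Or.inl h'
    · refine Or.inr ⟨?_, ?_⟩
      · simpa [Set.mem_insert_iff, Set.mem_singleton_iff] using ha
      · simpa [Set.mem_insert_iff, Set.mem_singleton_iff] using hb
  have C : Ctr N.arc arc' φ (Function.surjInv hsurj) u v :=
    ⟨hne, Function.surjInv_eq hsurj, hcol, huv, hinj', harc, hv_not_retic, hu_not_retic⟩
  have hacyc' : ∀ w', ¬ Relation.TransGen arc' w' w' := C.acyc N.acyclic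
  refine ⟨hacyc', ?_, C.semibinary hN.1, C.level1blocks hN.2, ?_⟩
  · intro w'
    obtain ⟨w, rfl⟩ := hsurj w'
    exact C.rtg_up (N.reach w)
  · intro a b c hcons
    have leaf_nm : ∀ t : X, φ (N.leafOf t) ≠ φ u := by
      intro t h
      rcases C.m_phi h with h' | h'
      · exact (N.leaf_iff u).2 ⟨t, h'.symm⟩ v huv
      · exact hv_not_leaf ⟨t, h'.symm⟩
    exact C.consistent_down hacyc' (leaf_nm a) (leaf_nm b) (leaf_nm c) hcons
end
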